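/- arXiv:2310.20037 — 7 statements merged into one kernel-verified Lean document; each statement's English description precedes it below -/
import Mathlib

section
/- Let Z be a Polish space, H a Hilbert space, g : Z → H bounded Borel measurable, f : H → ℝ convex and differentiable with L-Lipschitz gradient. Let P be a convex set of Borel probability measures on Z, μ̄ ∈ P, and λ̄ = ∇f(∫_Z g dμ̄). Then μ̄ minimizes μ ↦ f(∫_Z g dμ) over P if and only if ∫_Z ⟨λ̄, g⟩ dμ̄ = inf_{μ ∈ P} ∫_Z ⟨λ̄, g⟩ dμ. -/
open MeasureTheory
open scoped RealInnerProductSpace ENNReal NNReal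

/-- First-order optimality condition for the mean field optimization problem
`inf_{μ ∈ P} f(∫ g dμ)` over a convex set `P` of Borel probability measures:
`μ̄` is a minimizer iff it minimizes the linearized cost `μ ↦ ∫ ⟨λ̄, g⟩ dμ`,
where `λ̄ = ∇f(∫ g dμ̄)`. -/
theorem stmt_6 {H Z : Type*}
    [NormedAddCommGroup H] [InnerProductSpace ℝ H] [CompleteSpace H]
    [SecondCountableTopology H] [MeasurableSpace H] [BorelSpace H]
    [MetricSpace Z] [CompleteSpace Z] [SecondCountableTopology Z]
    [MeasurableSpace Z] [BorelSpace Z]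
    (g : Z → H) (hgm : Measurable g) (M : ℝ) (hM : ∀ z, ‖g z‖ ≤ M)
    (f : H → ℝ) (f' : H → H)
    (hconv : ConvexOn ℝ Set.univ f)
    (hdiff : ∀ x, HasGradientAt f (f' x) x)
    (L : ℝ≥0) (hlip : LipschitzWith L f')
    (P : Set (Measure Z)) (hP : ∀ μ ∈ P, IsProbabilityMeasure μ)
    (hPconv : ∀ μ ∈ P, ∀ ν ∈ P, ∀ t : ℝ, 0 ≤ t → t ≤ 1 →
      ENNReal.ofReal t • μ + ENNReal.ofReal (1 - t) • ν ∈ P)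
    (μb : Measure Z) (hμb : μb ∈ P)
    (lamb : H) (hlamb : lamb = f' (∫ z, g z ∂μb)) :
    (∀ μ ∈ P, f (∫ z, g z ∂μb) ≤ f (∫ z, g z ∂μ)) ↔
      ∫ z, ⟪lamb, g z⟫ ∂μb = sInf ((fun μ => ∫ z, ⟪lamb, g z⟫ ∂μ) '' P) := by
  set a : H := ∫ z, g z ∂μb with ha
  -- integrability of g with respect to any probability measure
  have hint : ∀ ν : Measure Z, IsProbabilityMeasure ν → Integrable g ν := by
    intro ν hν
    exact ⟨hgm.aestronglyMeasurable, HasFiniteIntegral.of_bounded (ae_of_all _ hM)⟩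
  -- the linear functional
  have hl : ∀ ν : Measure Z, IsProbabilityMeasure ν →
      ∫ z, ⟪lamb, g z⟫ ∂ν = ⟪lamb, ∫ z, g z ∂ν⟫ := fun ν hν =>
    integral_inner (hint ν hν) lamb
  -- the derivative of t ↦ f (a + t • (b - a)) at 0
  have hd : ∀ b : H, HasDerivAt (fun t : ℝ => f (a + t • (b - a))) ⟪lamb, b - a⟫ 0 := by
    intro b
    have hline : HasDerivAt (fun t : ℝ => a + t • (b - a)) (b - a) 0 := by
      simpa using ((hasDerivAt_id (0 : ℝ)).smul_const (b - a)).const_add a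
    have hf : HasFDerivAt f (InnerProductSpace.toDual ℝ H (f' a))
        ((fun t : ℝ => a + t • (b - a)) 0) := by
      simpa using (hdiff a).hasFDerivAt
    have := hf.comp_hasDerivAt 0 hline
    simpa [Function.comp_def, InnerProductSpace.toDual_apply_apply, hlamb, ha] using this
  have hslope : ∀ b : H,
      Filter.Tendsto (slope (fun t : ℝ => f (a + t • (b - a))) 0)
        (nhdsWithin 0 (Set.Ioi 0)) (nhds ⟪lamb, b - a⟫) := by
    intro b
    exact (hasDerivAt_iff_tendsto_slope.mp (hd b)).mono_left
      (nhdsWithin_mono _ (fun t ht => ne_of_gt ht))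
  -- integral over the segment measure
  have hseg : ∀ μ ∈ P, ∀ t : ℝ, 0 ≤ t → t ≤ 1 →
      (∫ z, g z ∂(ENNReal.ofReal t • μ + ENNReal.ofReal (1 - t) • μb))
        = a + t • ((∫ z, g z ∂μ) - a) := by
    intro μ hμ t ht0 ht1
    haveI := hP μ hμ
    haveI := hP μb hμb
    rw [integral_add_measure ((hint μ (hP μ hμ)).smul_measure ENNReal.ofReal_ne_top)
        ((hint μb (hP μb hμb)).smul_measure ENNReal.ofReal_ne_top),
      integral_smul_measure, integral_smul_measure,
      ENNReal.toReal_ofReal ht0, ENNReal.toReal_ofReal (by linarith)]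
    rw [smul_sub, sub_smul, one_smul]
    abel
  constructor
  · -- minimizer → linearized optimality
    intro hmin
    have hlb : ∀ μ ∈ P, ⟪lamb, a⟫ ≤ ⟪lamb, ∫ z, g z ∂μ⟫ := by
      intro μ hμ
      set b : H := ∫ z, g z ∂μ with hb
      have hd0 : (0 : ℝ) ≤ ⟪lamb, b - a⟫ := by
        refine ge_of_tendsto (hslope b) ?_
        filter_upwards [Ioc_mem_nhdsGT_of_mem (Set.mem_Ico.2 ⟨le_refl (0 : ℝ), one_pos⟩)]
          with t ht
        have hmem := hPconv μ hμ μb hμb t ht.1.le ht.2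
        have hfle : f a ≤ f (a + t • (b - a)) := by
          have := hmin _ hmem
          rwa [hseg μ hμ t ht.1.le ht.2] at this
        rw [slope_def_field, sub_zero]
        simp only [zero_smul, add_zero]
        exact div_nonneg (by linarith) ht.1.le
      have heq := inner_sub_right (𝕜 := ℝ) lamb b a
      linarith
    have hmemS : (∫ z, ⟪lamb, g z⟫ ∂μb) ∈ ((fun μ => ∫ z, ⟪lamb, g z⟫ ∂μ) '' P) :=
      ⟨μb, hμb, rfl⟩
    refine le_antisymm (le_csInf ⟨_, hmemS⟩ ?_) (csInf_le ?_ hmemS)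
    · rintro x ⟨μ, hμ, rfl⟩
      dsimp only
      rw [hl μ (hP μ hμ), hl μb (hP μb hμb)]
      exact hlb μ hμ
    · refine ⟨∫ z, ⟪lamb, g z⟫ ∂μb, ?_⟩
      rintro x ⟨μ, hμ, rfl⟩
      dsimp only
      rw [hl μ (hP μ hμ), hl μb (hP μb hμb)]
      exact hlb μ hμ
  · -- linearized optimality → minimizer
    intro h μ hμ
    set b : H := ∫ z, g z ∂μ with hb
    have hZ : Nonempty Z := by
      by_contra hne
      rw [not_nonempty_iff] at hne
      have := measure_univ (μ := μb) (self := hP μb hμb)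
      simp [Set.univ_eq_empty_iff.2 hne] at this
    obtain ⟨z0⟩ := hZ
    have hM0 : 0 ≤ M := le_trans (norm_nonneg _) (hM z0)
    -- lower bound for the image set
    have hBdd : BddBelow ((fun μ => ∫ z, ⟪lamb, g z⟫ ∂μ) '' P) := by
      refine ⟨-(‖lamb‖ * M), ?_⟩
      rintro x ⟨ν, hν, rfl⟩
      haveI := hP ν hν
      dsimp only
      rw [hl ν (hP ν hν)]
      have h1 : ‖∫ z, g z ∂ν‖ ≤ M := by
        have := norm_integral_le_of_norm_le_const (μ := ν) (f := g) (C := M)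
          (ae_of_all _ hM)
        simpa using this
      have h2 : |⟪lamb, ∫ z, g z ∂ν⟫| ≤ ‖lamb‖ * M := by
        refine (abs_real_inner_le_norm lamb _).trans ?_
        exact mul_le_mul_of_nonneg_left h1 (norm_nonneg _)
      linarith [neg_abs_le (⟪lamb, ∫ z, g z ∂ν⟫)]
    have hle : ⟪lamb, a⟫ ≤ ⟪lamb, b⟫ := by
      have := h ▸ csInf_le hBdd ⟨μ, hμ, rfl⟩
      dsimp only at this
      rwa [hl μ (hP μ hμ), hl μb (hP μb hμb)] at this
    have hd0 : (0 : ℝ) ≤ ⟪lamb, b - a⟫ := by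
      rw [inner_sub_right]; linarith
    -- convexity: f b - f a ≥ ⟪lamb, b - a⟫
    have hconvle : ⟪lamb, b - a⟫ ≤ f b - f a := by
      refine le_of_tendsto (hslope b) ?_
      filter_upwards [Ioc_mem_nhdsGT_of_mem (Set.mem_Ico.2 ⟨le_refl (0 : ℝ), one_pos⟩)]
        with t ht
      rw [slope_def_field, sub_zero, div_le_iff₀ ht.1]
      simp only [zero_smul, add_zero]
      have hcc := hconv.2 (Set.mem_univ a) (Set.mem_univ b)
        (by linarith [ht.2] : (0:ℝ) ≤ 1 - t) ht.1.le (by ring)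
      have hvec : a + t • (b - a) = (1 - t) • a + t • b := by
        rw [smul_sub, sub_smul, one_smul]; abel
      rw [hvec]
      simp only [smul_eq_mul] at hcc
      have : (1 - t) * f a + t * f b - f a = (f b - f a) * t := by ring
      linarith
    linarith
end

section
/- Let Z be a Polish space, g : Z → H bounded Borel measurable into a separable Hilbert space, f : H → ℝ convex with L-Lipschitz gradient, and 𝒫_m(Z) the measures with prescribed marginal m. If (μₙ) is a minimizing sequence for inf_{μ ∈ 𝒫_m(Z)} f(∫_Z g dμ) that is tight, then every narrow accumulation point μ̄ of (μₙ) belongs to 𝒫_m(Z) and is a minimizer, provided the function z ↦ ⟨∇f(∫ g dμ̄), g(z)⟩ is lower semi-continuous and bounded below. -/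
open MeasureTheory Filter Topology Set
open scoped RealInnerProductSpace ENNReal NNReal

-- lintegral version of portmanteau liminf for lsc nonneg functions
private lemma aux_lint {Ω : Type*} [MeasurableSpace Ω] [TopologicalSpace Ω]
    [OpensMeasurableSpace Ω]
    {μ : Measure Ω} {μs : ℕ → Measure Ω} {h : Ω → ℝ} (h_lsc : LowerSemicontinuous h)
    (h_nn : 0 ≤ h)
    (h_opens : ∀ G, IsOpen G → μ G ≤ atTop.liminf (fun i ↦ μs i G)) :
    ∫⁻ x, ENNReal.ofReal (h x) ∂μ ≤
      atTop.liminf (fun i ↦ ∫⁻ x, ENNReal.ofReal (h x) ∂(μs i)) := by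
  simp_rw [lintegral_eq_lintegral_meas_lt _ (Eventually.of_forall h_nn)
    h_lsc.measurable.aemeasurable]
  calc  ∫⁻ (t : ℝ) in Set.Ioi 0, μ {a | t < h a}
      ≤ ∫⁻ (t : ℝ) in Set.Ioi 0, atTop.liminf (fun i ↦ (μs i) {a | t < h a}) :=
        lintegral_mono (fun t ↦ h_opens _ (h_lsc.isOpen_preimage t))
    _ ≤ atTop.liminf (fun i ↦ ∫⁻ (t : ℝ) in Set.Ioi 0, (μs i) {a | t < h a}) :=
        lintegral_liminf_le (fun n ↦ Antitone.measurable (fun s t hst ↦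
          measure_mono (fun ω hω ↦ lt_of_le_of_lt hst hω)))

-- real-integral version for probability measures, under an upper bound
private lemma aux_int {Ω : Type*} [MeasurableSpace Ω] [TopologicalSpace Ω]
    [OpensMeasurableSpace Ω]
    {μ : Measure Ω} [IsProbabilityMeasure μ] {μs : ℕ → Measure Ω}
    [∀ i, IsProbabilityMeasure (μs i)]
    {h : Ω → ℝ} (h_lsc : LowerSemicontinuous h) (h_nn : 0 ≤ h) {B : ℝ}
    (hB : ∀ x, h x ≤ B)
    (h_opens : ∀ G, IsOpen G → μ G ≤ atTop.liminf (fun i ↦ μs i G)) :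
    ∫ x, h x ∂μ ≤ atTop.liminf (fun i ↦ ∫ x, h x ∂(μs i)) := by
  have hmble : AEStronglyMeasurable h μ := h_lsc.measurable.aestronglyMeasurable
  have key := aux_lint h_lsc h_nn h_opens
  have bnd : ∀ (ν : Measure Ω), IsProbabilityMeasure ν →
      ∫⁻ x, ENNReal.ofReal (h x) ∂ν ≤ ENNReal.ofReal B := by
    intro ν hν
    calc ∫⁻ x, ENNReal.ofReal (h x) ∂ν ≤ ∫⁻ _, ENNReal.ofReal B ∂ν :=
          lintegral_mono (fun x ↦ ENNReal.ofReal_le_ofReal (hB x))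
      _ = ENNReal.ofReal B := by simp
  rw [integral_eq_lintegral_of_nonneg_ae (Eventually.of_forall h_nn) hmble]
  have eqi : ∀ i, ∫ x, h x ∂(μs i) = (∫⁻ x, ENNReal.ofReal (h x) ∂(μs i)).toReal :=
    fun i ↦ integral_eq_lintegral_of_nonneg_ae (Eventually.of_forall h_nn)
      h_lsc.measurable.aestronglyMeasurable
  simp_rw [eqi]
  rw [ENNReal.liminf_toReal_eq ENNReal.ofReal_ne_top
    (Eventually.of_forall (fun i ↦ bnd (μs i) inferInstance))]
  apply ENNReal.toReal_mono _ key
  exact ne_top_of_le_ne_top ENNReal.ofReal_ne_top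
    (liminf_le_of_le ⟨0, by simp⟩ (fun y hy ↦ by
      obtain ⟨i, hi⟩ := hy.exists
      exact hi.trans (bnd (μs i) inferInstance)))

-- convexity + gradient subgradient inequality
private lemma aux_grad {H : Type*} [NormedAddCommGroup H] [InnerProductSpace ℝ H] [CompleteSpace H]
    {f : H → ℝ} {f' : H → H} (hconv : ConvexOn ℝ Set.univ f)
    (hdiff : ∀ x, HasGradientAt f (f' x) x) (x y : H) :
    f x + ⟪f' x, y - x⟫ ≤ f y := by
  set v := y - x with hv
  have hc : HasDerivAt (fun t : ℝ ↦ x + t • v) v 0 := by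
    simpa using ((hasDerivAt_id (0 : ℝ)).smul_const v).const_add x
  have hF : HasFDerivAt f (InnerProductSpace.toDual ℝ H (f' x)) x := (hdiff x).hasFDerivAt
  have hF' : HasFDerivAt f (InnerProductSpace.toDual ℝ H (f' x)) ((fun t : ℝ ↦ x + t • v) 0) := by
    simpa using hF
  have hd : HasDerivAt (fun t : ℝ ↦ f (x + t • v)) ⟪f' x, v⟫ 0 := by
    have := hF'.comp_hasDerivAt 0 hc
    simpa [InnerProductSpace.toDual_apply_apply, Function.comp_def] using this
  set φ : ℝ → ℝ := fun t ↦ f (x + t • v) with hφ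
  have hslope : Tendsto (slope φ 0) (𝓝[>] 0) (𝓝 ⟪f' x, v⟫) :=
    (hasDerivAt_iff_tendsto_slope.mp hd).mono_left
      (nhdsWithin_mono 0 (fun t ht ↦ ne_of_gt ht))
  have hle : ∀ᶠ t in 𝓝[>] (0 : ℝ), slope φ 0 t ≤ f y - f x := by
    filter_upwards [Ioo_mem_nhdsGT_of_mem (Set.left_mem_Ico.mpr one_pos)] with t ht
    have h1 : x + t • v = (1 - t) • x + t • y := by
      rw [hv]; rw [smul_sub]; module
    have h2 : φ t ≤ (1 - t) * f x + t * f y := by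
      rw [hφ]; simp only [h1]
      exact hconv.2 (Set.mem_univ x) (Set.mem_univ y) (by linarith [ht.2]) (le_of_lt ht.1)
        (by ring)
    have h0 : φ 0 = f x := by simp [hφ]
    rw [slope_def_field, h0, sub_zero, div_le_iff₀ ht.1]
    nlinarith [ht.1]
  have := le_of_tendsto hslope hle
  linarith

/-- Existence of a solution under tightness: every narrow accumulation point of a tight
minimizing sequence of the MFO problem is feasible and optimal. -/
theorem stmt_9 {X Y H : Type*}
    [MetricSpace X] [CompleteSpace X] [SecondCountableTopology X]
    [MeasurableSpace X] [BorelSpace X]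
    [MetricSpace Y] [CompleteSpace Y] [SecondCountableTopology Y]
    [MeasurableSpace Y] [BorelSpace Y]
    [NormedAddCommGroup H] [InnerProductSpace ℝ H] [CompleteSpace H]
    [SecondCountableTopology H] [MeasurableSpace H] [BorelSpace H]
    (Z : Set (X × Y)) (hZc : IsClosed Z)
    (g : X × Y → H) (hgm : Measurable g) (M : ℝ) (hM : ∀ z, ‖g z‖ ≤ M)
    (f : H → ℝ) (f' : H → H)
    (hconv : ConvexOn ℝ Set.univ f)
    (hdiff : ∀ x, HasGradientAt f (f' x) x)
    (L : ℝ≥0) (hlip : LipschitzWith L f')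
    (m : Measure X) [IsProbabilityMeasure m]
    (A : Set (ProbabilityMeasure (X × Y)))
    (hA : A = {μ : ProbabilityMeasure (X × Y) |
      (μ : Measure (X × Y)) Zᶜ = 0 ∧ (μ : Measure (X × Y)).map Prod.fst = m})
    (J : ProbabilityMeasure (X × Y) → ℝ)
    (hJ : ∀ μ, J μ = f (∫ z, g z ∂(μ : Measure (X × Y))))
    (μn : ℕ → ProbabilityMeasure (X × Y)) (hμn : ∀ n, μn n ∈ A)
    (hmin : Tendsto (fun n => J (μn n)) atTop (𝓝 (sInf (J '' A))))
    (htight : ∀ ε : ℝ, 0 < ε → ∃ K : Set (X × Y), K ⊆ Z ∧ IsCompact K ∧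
      ∀ n, 1 - ε ≤ (((μn n : Measure (X × Y)) K).toReal))
    (μb : ProbabilityMeasure (X × Y)) (φ : ℕ → ℕ) (hφ : StrictMono φ)
    (hnarrow : Tendsto (fun n => μn (φ n)) atTop (𝓝 μb))
    (hlsc : LowerSemicontinuous
      (fun z => ⟪f' (∫ w, g w ∂(μb : Measure (X × Y))), g z⟫))
    (hbdd : ∃ c : ℝ, ∀ z, c ≤ ⟪f' (∫ w, g w ∂(μb : Measure (X × Y))), g z⟫) :
    μb ∈ A ∧ ∀ μ ∈ A, J μb ≤ J μ := by
  -- basic facts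
  have hne : Nonempty (X × Y) := by
    by_contra h
    rw [not_nonempty_iff] at h
    have : (μb : Measure (X × Y)) Set.univ = 1 := measure_univ
    simp [Set.univ_eq_empty_iff.mpr h] at this
  have hM0 : 0 ≤ M := le_trans (norm_nonneg _) (hM (Classical.arbitrary _))
  -- integrability of g
  have hint : ∀ (κ : Measure (X × Y)), IsProbabilityMeasure κ → Integrable g κ := fun κ hκ ↦
    ⟨hgm.aestronglyMeasurable, HasFiniteIntegral.of_bounded (Eventually.of_forall hM)⟩
  -- feasibility: concentration on Z
  have hZ1 : ∀ n, (μn n : Measure (X × Y)) Z = 1 := by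
    intro n
    have h1 := (hA ▸ hμn n).1
    have h2 := measure_add_measure_compl (μ := (μn n : Measure (X × Y))) hZc.measurableSet
    rw [h1, add_zero] at h2
    simpa using h2
  have hμbZ : (μb : Measure (X × Y)) Z = 1 := by
    have hls := ProbabilityMeasure.limsup_measure_closed_le_of_tendsto hnarrow hZc
    simp_rw [hZ1] at hls
    rw [limsup_const] at hls
    exact le_antisymm prob_le_one hls
  have hfeas1 : (μb : Measure (X × Y)) Zᶜ = 0 := by
    rw [measure_compl hZc.measurableSet (measure_ne_top _ _), hμbZ, measure_univ, tsub_self]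
  -- feasibility: marginal
  set pm : ProbabilityMeasure X := ⟨m, inferInstance⟩ with hpm
  have hmapc : ∀ n,
      ProbabilityMeasure.map (μn n) (continuous_fst.measurable.aemeasurable) = pm := by
    intro n
    apply ProbabilityMeasure.toMeasure_injective
    rw [ProbabilityMeasure.toMeasure_map]
    exact (hA ▸ hμn n).2
  have hmapt := ProbabilityMeasure.tendsto_map_of_tendsto_of_continuous
    (fun i ↦ μn (φ i)) μb hnarrow continuous_fst
  simp_rw [hmapc] at hmapt
  have hfeas2' : ProbabilityMeasure.map μb continuous_fst.measurable.aemeasurable = pm :=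
    tendsto_nhds_unique hmapt tendsto_const_nhds
  have hfeas2 : (μb : Measure (X × Y)).map Prod.fst = m := by
    have h3 := congrArg ProbabilityMeasure.toMeasure hfeas2'
    rwa [ProbabilityMeasure.toMeasure_map] at h3
  have hmem : μb ∈ A := by rw [hA]; exact ⟨hfeas1, hfeas2⟩
  refine ⟨hmem, ?_⟩
  -- optimality
  set a := ∫ w, g w ∂(μb : Measure (X × Y)) with ha
  set u := f' a with hu
  have hnormint : ∀ (κ : Measure (X × Y)), IsProbabilityMeasure κ → ‖∫ z, g z ∂κ‖ ≤ M := by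
    intro κ hκ
    calc ‖∫ z, g z ∂κ‖ ≤ M * (κ Set.univ).toReal :=
          norm_integral_le_of_norm_le_const (Eventually.of_forall hM)
      _ = M := by simp
  have hbddJ : BddBelow (J '' A) := by
    refine ⟨f 0 - ‖f' 0‖ * M, ?_⟩
    rintro x ⟨μ, hμ, rfl⟩
    rw [hJ]
    have h1 := aux_grad hconv hdiff 0 (∫ z, g z ∂(μ : Measure (X × Y)))
    have h2 : |⟪f' 0, (∫ z, g z ∂(μ : Measure (X × Y))) - 0⟫| ≤ ‖f' 0‖ * M := by
      rw [sub_zero]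
      refine (abs_real_inner_le_norm _ _).trans ?_
      exact mul_le_mul_of_nonneg_left (hnormint _ inferInstance) (norm_nonneg _)
    have h3 := (abs_le.mp h2).1
    linarith
  have hIle : ∀ μ ∈ A, sInf (J '' A) ≤ J μ := fun μ hμ ↦ csInf_le hbddJ ⟨μ, hμ, rfl⟩
  obtain ⟨c, hc⟩ := hbdd
  set h : X × Y → ℝ := fun z ↦ ⟪u, g z⟫ - c with hh
  have h_lsc : LowerSemicontinuous h := by
    intro z y hy
    have h4 := hlsc z (y + c) (by simp only [hh] at hy; linarith)
    filter_upwards [h4] with w hw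
    simp only [hh]
    linarith
  have h_nn : 0 ≤ h := fun z ↦ by have := hc z; simp only [hh, Pi.zero_apply]; linarith
  have h_ub : ∀ z, h z ≤ ‖u‖ * M - c := by
    intro z
    have h5 := real_inner_le_norm u (g z)
    have h6 : ‖u‖ * ‖g z‖ ≤ ‖u‖ * M := mul_le_mul_of_nonneg_left (hM z) (norm_nonneg _)
    simp only [hh]
    linarith
  have h_opens : ∀ G, IsOpen G → (μb : Measure (X × Y)) G ≤
      atTop.liminf (fun i ↦ ((μn (φ i)) : Measure (X × Y)) G) :=
    fun G hG ↦ ProbabilityMeasure.le_liminf_measure_open_of_tendsto hnarrow hG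
  have key := aux_int (μ := (μb : Measure (X × Y)))
    (μs := fun i ↦ (μn (φ i) : Measure (X × Y))) h_lsc h_nn h_ub h_opens
  have hinner : ∀ (κ : Measure (X × Y)), IsProbabilityMeasure κ →
      ∫ z, h z ∂κ = ⟪u, ∫ z, g z ∂κ⟫ - c := by
    intro κ hκ
    have hi1 : Integrable (fun z ↦ ⟪u, g z⟫) κ := by
      refine ⟨(measurable_const.inner hgm).aestronglyMeasurable,
        HasFiniteIntegral.of_bounded (C := ‖u‖ * M) (Eventually.of_forall fun z ↦ ?_)⟩
      refine (abs_real_inner_le_norm u (g z)).trans ?_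
      exact mul_le_mul_of_nonneg_left (hM z) (norm_nonneg _)
    simp only [hh]
    rw [integral_sub hi1 (integrable_const c), integral_inner (hint κ hκ) u, integral_const]
    simp
  have hminφ : Tendsto (fun i ↦ J (μn (φ i))) atTop (𝓝 (sInf (J '' A))) :=
    hmin.comp hφ.tendsto_atTop
  have hfa : f a ≤ sInf (J '' A) := by
    have hD : ∫ z, h z ∂(μb : Measure (X × Y)) = ⟪u, a⟫ - c := hinner _ inferInstance
    by_contra hcon
    push_neg at hcon
    set ε := (f a - sInf (J '' A)) / 2 with hε
    have hεpos : 0 < ε := by simp only [hε]; linarith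
    have hlt : (⟪u, a⟫ - c) - ε < atTop.liminf
        (fun i ↦ ∫ z, h z ∂((μn (φ i)) : Measure (X × Y))) := by
      rw [← hD]
      calc (∫ z, h z ∂(μb : Measure (X × Y))) - ε < ∫ z, h z ∂(μb : Measure (X × Y)) := by
            linarith
        _ ≤ _ := key
    have hbder : atTop.IsBoundedUnder (· ≥ ·)
        (fun i ↦ ∫ z, h z ∂((μn (φ i)) : Measure (X × Y))) :=
      ⟨0, eventually_map.mpr (Eventually.of_forall fun i ↦ integral_nonneg h_nn)⟩
    have hev := eventually_lt_of_lt_liminf hlt hbder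
    have hev2 : ∀ᶠ i in atTop, f a - ε ≤ J (μn (φ i)) := by
      filter_upwards [hev] with i hi
      have hgr := aux_grad hconv hdiff a (∫ z, g z ∂((μn (φ i)) : Measure (X × Y)))
      rw [hJ]
      have hi' : ∫ z, h z ∂((μn (φ i)) : Measure (X × Y)) =
          ⟪u, ∫ z, g z ∂((μn (φ i)) : Measure (X × Y))⟫ - c := hinner _ inferInstance
      have hsub : ⟪u, (∫ z, g z ∂((μn (φ i)) : Measure (X × Y))) - a⟫ =
          ⟪u, ∫ z, g z ∂((μn (φ i)) : Measure (X × Y))⟫ - ⟪u, a⟫ := inner_sub_right _ _ _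
      rw [← hu] at hgr
      linarith
    have h7 := ge_of_tendsto hminφ hev2
    simp only [hε] at h7
    linarith
  intro μ hμ
  rw [hJ μb]
  exact le_trans hfa (hIle μ hμ)
end

section
/- Let X be a closed subset of a separable Banach space, Y Polish, Z ⊆ X×Y closed with compact nonempty sections Z_x such that x ⇝ Z_x is upper semi-continuous, and g : Z → H continuous into a separable Hilbert space. Suppose the set-valued map 𝒵(x) = {g(x,y) : y ∈ Z_x} is L_g-Lipschitz (i.e., 𝒵(x₁) ⊆ 𝒵(x₂) + B(0, L_g d_X(x₁,x₂)) for all x₁,x₂). Then the set-valued map S(x,y,x') = {(x', y') ∈ Z : ‖g(x',y') − g(x,y)‖ ≤ L_g d_X(x,x')} from Z × X into Z has nonempty closed values and admits a Borel measurable selection s with ‖g(s(x,y,x')) − g(x,y)‖ ≤ L_g d_X(x,x') for all (x,y,x'). -/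
open MeasureTheory
open scoped ENNReal
open Metric Filter Topology

namespace Stmt11Aux

variable {W Q : Type*} [MetricSpace Q]

/-- candidate indices at level 0 -/
def T0 (D : Set W) (S : W → Set Q) (e : ℕ → Q) (w : W) : Set ℕ :=
  {m | w ∉ D ∨ ¬(S w).Nonempty ∨ (S w ∩ ball (e m) 1).Nonempty}

/-- candidate indices at level `k+1`, given previous index `j` -/
def Tstep (D : Set W) (S : W → Set Q) (e : ℕ → Q) (k j : ℕ) (w : W) : Set ℕ :=
  {m | w ∉ D ∨ ¬(S w ∩ ball (e j) ((1/2 : ℝ)^k)).Nonempty ∨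
    (S w ∩ (ball (e m) ((1/2 : ℝ)^(k+1)) ∩ ball (e j) ((1/2 : ℝ)^k))).Nonempty}

/-- the recursively defined index function -/
noncomputable def nsel (D : Set W) (S : W → Set Q) (e : ℕ → Q) : ℕ → W → ℕ
  | 0, w => sInf (T0 D S e w)
  | (k+1), w => sInf (Tstep D S e k (nsel D S e k w) w)

@[simp] theorem nsel_zero (D : Set W) (S : W → Set Q) (e : ℕ → Q) (w : W) :
    nsel D S e 0 w = sInf (T0 D S e w) := by simp [nsel]

@[simp] theorem nsel_succ (D : Set W) (S : W → Set Q) (e : ℕ → Q) (k : ℕ) (w : W) :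
    nsel D S e (k+1) w = sInf (Tstep D S e k (nsel D S e k w) w) := by simp [nsel]

theorem T0_nonempty {D : Set W} {S : W → Set Q} {e : ℕ → Q} (he : DenseRange e) (w : W) :
    (T0 D S e w).Nonempty := by
  by_cases hw : w ∈ D
  · by_cases hS : (S w).Nonempty
    · obtain ⟨q, hq⟩ := hS
      obtain ⟨m, hm⟩ := he.exists_dist_lt q one_pos
      exact ⟨m, Or.inr (Or.inr ⟨q, hq, mem_ball.2 hm⟩)⟩
    · exact ⟨0, Or.inr (Or.inl hS)⟩
  · exact ⟨0, Or.inl hw⟩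

theorem Tstep_nonempty {D : Set W} {S : W → Set Q} {e : ℕ → Q} (he : DenseRange e)
    (k j : ℕ) (w : W) : (Tstep D S e k j w).Nonempty := by
  by_cases hw : w ∈ D
  · by_cases hS : (S w ∩ ball (e j) ((1/2 : ℝ)^k)).Nonempty
    · obtain ⟨q, hq1, hq2⟩ := hS
      obtain ⟨m, hm⟩ := he.exists_dist_lt q (by positivity : (0:ℝ) < (1/2 : ℝ)^(k+1))
      exact ⟨m, Or.inr (Or.inr ⟨q, hq1, mem_ball.2 hm, hq2⟩)⟩
    · exact ⟨0, Or.inr (Or.inl hS)⟩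
  · exact ⟨0, Or.inl hw⟩

theorem nsel_invariant {D : Set W} {S : W → Set Q} {e : ℕ → Q} (he : DenseRange e)
    (hne : ∀ w ∈ D, (S w).Nonempty) {w : W} (hw : w ∈ D) :
    ∀ k, (S w ∩ ball (e (nsel D S e k w)) ((1/2 : ℝ)^k)).Nonempty := by
  intro k
  induction k with
  | zero =>
    have h := Nat.sInf_mem (T0_nonempty (D := D) (S := S) he w)
    rcases h with h | h | h
    · exact absurd hw h
    · exact absurd (hne w hw) h
    · simpa [nsel] using h
  | succ k ih =>
    have hTs := Tstep_nonempty (D := D) (S := S) he k (nsel D S e k w) w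
    have h := Nat.sInf_mem hTs
    rcases h with h | h | h
    · exact absurd hw h
    · exact absurd ih h
    · obtain ⟨q, hq1, hq2, _⟩ := h
      exact ⟨q, hq1, by simpa [nsel] using hq2⟩

theorem nsel_dist_succ {D : Set W} {S : W → Set Q} {e : ℕ → Q} (he : DenseRange e)
    (hne : ∀ w ∈ D, (S w).Nonempty) {w : W} (hw : w ∈ D) (k : ℕ) :
    dist (e (nsel D S e k w)) (e (nsel D S e (k+1) w)) ≤ (3/2 : ℝ) * (1/2 : ℝ)^k := by
  have hTs := Tstep_nonempty (D := D) (S := S) he k (nsel D S e k w) w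
  have h := Nat.sInf_mem hTs
  rcases h with h | h | h
  · exact absurd hw h
  · exact absurd (nsel_invariant he hne hw k) h
  · obtain ⟨q, _, hq2, hq3⟩ := h
    have h1 : dist q (e (sInf (Tstep D S e k (nsel D S e k w) w))) < (1/2 : ℝ)^(k+1) :=
      mem_ball.1 hq2
    have h2 : dist q (e (nsel D S e k w)) < (1/2 : ℝ)^k := mem_ball.1 hq3
    have : dist (e (nsel D S e k w)) (e (nsel D S e (k+1) w)) ≤
        dist q (e (nsel D S e k w)) + dist q (e (nsel D S e (k+1) w)) :=
      dist_triangle_left _ _ _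
    have hk1 : (1/2 : ℝ)^(k+1) = (1/2 : ℝ) * (1/2 : ℝ)^k := by ring
    have h1' : dist q (e (nsel D S e (k+1) w)) < (1/2 : ℝ)^(k+1) := by
      simpa [nsel] using h1
    nlinarith [pow_pos (by norm_num : (0:ℝ) < 1/2) k]

theorem measurable_setOf_mem_T0 {W Q : Type*} [MetricSpace Q] [MeasurableSpace W]
    {D : Set W} {S : W → Set Q} {e : ℕ → Q} (hD : MeasurableSet D)
    (hmeas : ∀ U : Set Q, IsOpen U → MeasurableSet {w | w ∈ D ∧ (S w ∩ U).Nonempty})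
    (hne : ∀ w ∈ D, (S w).Nonempty) (m : ℕ) :
    MeasurableSet {w | m ∈ T0 D S e w} := by
  have : {w | m ∈ T0 D S e w} = Dᶜ ∪ {w | w ∈ D ∧ (S w ∩ ball (e m) 1).Nonempty} := by
    ext w
    simp only [T0, Set.mem_setOf_eq, Set.mem_union, Set.mem_compl_iff]
    constructor
    · rintro (h | h | h)
      · exact Or.inl h
      · by_cases hw : w ∈ D
        · exact absurd (hne w hw) h
        · exact Or.inl hw
      · by_cases hw : w ∈ D
        · exact Or.inr ⟨hw, h⟩
        · exact Or.inl hw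
    · rintro (h | h)
      · exact Or.inl h
      · exact Or.inr (Or.inr h.2)
  rw [this]
  exact hD.compl.union (hmeas _ isOpen_ball)

theorem measurable_setOf_mem_Tstep {W Q : Type*} [MetricSpace Q] [MeasurableSpace W]
    {D : Set W} {S : W → Set Q} {e : ℕ → Q} (hD : MeasurableSet D)
    (hmeas : ∀ U : Set Q, IsOpen U → MeasurableSet {w | w ∈ D ∧ (S w ∩ U).Nonempty})
    (k j m : ℕ) :
    MeasurableSet {w | m ∈ Tstep D S e k j w} := by
  have : {w | m ∈ Tstep D S e k j w} =
      Dᶜ ∪ ({w | w ∈ D ∧ (S w ∩ ball (e j) ((1/2 : ℝ)^k)).Nonempty}ᶜ ∪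
        {w | w ∈ D ∧ (S w ∩ (ball (e m) ((1/2 : ℝ)^(k+1)) ∩ ball (e j) ((1/2 : ℝ)^k))).Nonempty}) := by
    ext w
    simp only [Tstep, Set.mem_setOf_eq, Set.mem_union, Set.mem_compl_iff]
    by_cases hw : w ∈ D <;> tauto
  rw [this]
  exact hD.compl.union (((hmeas _ isOpen_ball).compl).union
    (hmeas _ (isOpen_ball.inter isOpen_ball)))

theorem sInf_eq_setOf {W : Type*} (T : W → Set ℕ) (hT : ∀ w, (T w).Nonempty) (m : ℕ) :
    {w | sInf (T w) = m} = {w | m ∈ T w} ∩ ⋂ i ∈ Set.Iio m, {w | i ∉ T w} := by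
  ext w
  simp only [Set.mem_setOf_eq, Set.mem_inter_iff, Set.mem_iInter, Set.mem_Iio]
  constructor
  · rintro rfl
    exact ⟨Nat.sInf_mem (hT w), fun i hi => Nat.notMem_of_lt_sInf hi⟩
  · rintro ⟨hm, hlt⟩
    refine le_antisymm (Nat.sInf_le hm) ?_
    by_contra h
    push_neg at h
    exact hlt _ h (Nat.sInf_mem (hT w))

theorem measurable_nsel {W Q : Type*} [MetricSpace Q] [MeasurableSpace W]
    {D : Set W} {S : W → Set Q} {e : ℕ → Q} (he : DenseRange e) (hD : MeasurableSet D)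
    (hmeas : ∀ U : Set Q, IsOpen U → MeasurableSet {w | w ∈ D ∧ (S w ∩ U).Nonempty})
    (hne : ∀ w ∈ D, (S w).Nonempty) :
    ∀ k, Measurable (nsel D S e k) := by
  intro k
  induction k with
  | zero =>
    apply measurable_to_countable'
    intro m
    have : nsel D S e 0 ⁻¹' {m} = {w | sInf (T0 D S e w) = m} := by
      ext w; simp [nsel]
    rw [this, sInf_eq_setOf _ (fun w => T0_nonempty he w)]
    refine (measurable_setOf_mem_T0 hD hmeas hne m).inter ?_
    exact MeasurableSet.biInter (Set.to_countable _)
      (fun i _ => (measurable_setOf_mem_T0 hD hmeas hne i).compl)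
  | succ k ih =>
    apply measurable_to_countable'
    intro m
    have key : nsel D S e (k+1) ⁻¹' {m} =
        ⋃ j, (nsel D S e k ⁻¹' {j}) ∩ {w | sInf (Tstep D S e k j w) = m} := by
      ext w
      simp only [Set.mem_preimage, Set.mem_singleton_iff, Set.mem_iUnion, Set.mem_inter_iff,
        Set.mem_setOf_eq]
      constructor
      · intro h
        exact ⟨nsel D S e k w, rfl, by simpa [nsel] using h⟩
      · rintro ⟨j, rfl, h⟩
        simpa [nsel] using h
    rw [key]
    refine MeasurableSet.iUnion (fun j => (ih (MeasurableSet.singleton j)).inter ?_)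
    rw [sInf_eq_setOf _ (fun w => Tstep_nonempty he k j w)]
    refine (measurable_setOf_mem_Tstep hD hmeas k j m).inter ?_
    exact MeasurableSet.biInter (Set.to_countable _)
      (fun i _ => (measurable_setOf_mem_Tstep hD hmeas k j i).compl)

/-- Kuratowski–Ryll-Nardzewski style measurable selection theorem. -/
theorem krn_selection {W Q : Type*} [MeasurableSpace W]
    [MetricSpace Q] [CompleteSpace Q] [SecondCountableTopology Q]
    [MeasurableSpace Q] [BorelSpace Q] [Nonempty Q]
    (D : Set W) (hD : MeasurableSet D) (S : W → Set Q)
    (hne : ∀ w ∈ D, (S w).Nonempty) (hcl : ∀ w ∈ D, IsClosed (S w))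
    (hmeas : ∀ U : Set Q, IsOpen U → MeasurableSet {w | w ∈ D ∧ (S w ∩ U).Nonempty}) :
    ∃ s : W → Q, Measurable s ∧ ∀ w ∈ D, s w ∈ S w := by
  classical
  obtain ⟨e, he⟩ := TopologicalSpace.exists_dense_seq Q
  set f : ℕ → W → Q := fun k w => if w ∈ D then e (nsel D S e k w) else Classical.arbitrary Q
    with hf_def
  have hf_meas : ∀ k, Measurable (f k) := by
    intro k
    exact Measurable.ite hD ((measurable_from_top).comp (measurable_nsel he hD hmeas hne k))
      measurable_const
  have hcau : ∀ w, CauchySeq (fun k => f k w) := by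
    intro w
    refine cauchySeq_of_le_geometric (1/2 : ℝ) (3/2 : ℝ) (by norm_num) (fun k => ?_)
    by_cases hw : w ∈ D
    · simp only [hf_def, if_pos hw]
      exact nsel_dist_succ he hne hw k
    · simp only [hf_def, if_neg hw, dist_self]
      positivity
  have hconv : ∀ w, ∃ p : Q, Filter.Tendsto (fun k => f k w) Filter.atTop (nhds p) :=
    fun w => cauchySeq_tendsto_of_complete (hcau w)
  choose s hs using hconv
  refine ⟨s, ?_, ?_⟩
  · exact measurable_of_tendsto_metrizable hf_meas (tendsto_pi_nhds.2 hs)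
  · intro w hw
    -- pick witnesses q k ∈ S w close to f k w; they tend to s w
    have hinv := nsel_invariant he hne hw
    choose q hq1 hq2 using fun k => hinv k
    have hq2' : ∀ k, dist (q k) (f k w) < (1/2 : ℝ)^k := by
      intro k
      have := hq2 k
      simpa [hf_def, if_pos hw] using mem_ball.1 this
    have hqtend : Filter.Tendsto q Filter.atTop (nhds (s w)) := by
      have hd : Filter.Tendsto (fun k => dist (q k) (s w)) Filter.atTop (nhds 0) := by
        have hb : ∀ k, dist (q k) (s w) ≤ (1/2 : ℝ)^k + dist (f k w) (s w) := by
          intro k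
          calc dist (q k) (s w) ≤ dist (q k) (f k w) + dist (f k w) (s w) := dist_triangle _ _ _
            _ ≤ (1/2 : ℝ)^k + dist (f k w) (s w) := by linarith [hq2' k]
        have h0 : Filter.Tendsto (fun k => (1/2 : ℝ)^k + dist (f k w) (s w))
            Filter.atTop (nhds 0) := by
          have h1 : Filter.Tendsto (fun k : ℕ => (1/2 : ℝ)^k) Filter.atTop (nhds 0) :=
            tendsto_pow_atTop_nhds_zero_of_lt_one (by norm_num) (by norm_num)
          have h2 : Filter.Tendsto (fun k => dist (f k w) (s w)) Filter.atTop (nhds 0) :=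
            tendsto_iff_dist_tendsto_zero.1 (hs w)
          simpa using h1.add h2
        exact squeeze_zero (fun k => dist_nonneg) hb h0
      exact tendsto_iff_dist_tendsto_zero.2 hd
    exact (hcl w hw).mem_of_tendsto hqtend (Filter.Eventually.of_forall hq1)

end Stmt11Aux

open Stmt11Aux

/-- Existence of a Borel measurable selection `s` of the set-valued map
`S(x,y,x') = {(x',y') ∈ Z : ‖g(x',y') − g(x,y)‖ ≤ L_g d(x,x')}`, which moreover has
nonempty closed values. -/
theorem stmt_11 {E Y H : Type*}
    [NormedAddCommGroup E] [NormedSpace ℝ E] [CompleteSpace E]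
    [SecondCountableTopology E] [MeasurableSpace E] [BorelSpace E]
    [MetricSpace Y] [CompleteSpace Y] [SecondCountableTopology Y]
    [MeasurableSpace Y] [BorelSpace Y]
    [NormedAddCommGroup H] [InnerProductSpace ℝ H] [CompleteSpace H]
    [SecondCountableTopology H]
    (X : Set E) (hX : IsClosed X)
    (Z : Set (E × Y)) (hZc : IsClosed Z) (hZX : ∀ z ∈ Z, z.1 ∈ X)
    (hsec : ∀ x ∈ X, IsCompact {y | (x, y) ∈ Z} ∧ {y | (x, y) ∈ Z}.Nonempty)
    (husc : ∀ x ∈ X, ∀ U : Set Y, IsOpen U → {y | (x, y) ∈ Z} ⊆ U →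
      ∃ η > (0 : ℝ), ∀ x' ∈ X, dist x x' < η → {y | (x', y) ∈ Z} ⊆ U)
    (g : E × Y → H) (hg : ContinuousOn g Z)
    (Lg : ℝ) (hLg : 0 ≤ Lg)
    (hlip : ∀ x₁ ∈ X, ∀ x₂ ∈ X, ∀ y₁, (x₁, y₁) ∈ Z →
      ∃ y₂, (x₂, y₂) ∈ Z ∧ ‖g (x₂, y₂) - g (x₁, y₁)‖ ≤ Lg * dist x₁ x₂) :
    (∀ x y x', (x, y) ∈ Z → x' ∈ X →
      ({q : E × Y | q ∈ Z ∧ q.1 = x' ∧ ‖g q - g (x, y)‖ ≤ Lg * dist x x'}).Nonempty ∧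
      IsClosed {q : E × Y | q ∈ Z ∧ q.1 = x' ∧ ‖g q - g (x, y)‖ ≤ Lg * dist x x'}) ∧
    ∃ s : (E × Y) × E → E × Y, Measurable s ∧
      ∀ x y x', (x, y) ∈ Z → x' ∈ X →
        s ((x, y), x') ∈ Z ∧ (s ((x, y), x')).1 = x' ∧
        ‖g (s ((x, y), x')) - g (x, y)‖ ≤ Lg * dist x x' := by
  classical
  -- a general closedness fact for the values of the set-valued map
  have hclosed : ∀ (v : H) (c : ℝ) (x' : E),
      IsClosed {q : E × Y | q ∈ Z ∧ q.1 = x' ∧ ‖g q - v‖ ≤ c} := by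
    intro v c x'
    have h1 : IsClosed (Z ∩ (fun q => ‖g q - v‖) ⁻¹' Set.Iic c) :=
      ContinuousOn.preimage_isClosed_of_isClosed
        ((hg.sub continuousOn_const).norm) hZc isClosed_Iic
    have heq : {q : E × Y | q ∈ Z ∧ q.1 = x' ∧ ‖g q - v‖ ≤ c} =
        (Z ∩ (fun q => ‖g q - v‖) ⁻¹' Set.Iic c) ∩ (Prod.fst ⁻¹' {x'}) := by
      ext q
      simp only [Set.mem_setOf_eq, Set.mem_inter_iff, Set.mem_preimage, Set.mem_Iic,
        Set.mem_singleton_iff]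
      tauto
    rw [heq]
    exact h1.inter (isClosed_singleton.preimage continuous_fst)
  constructor
  · intro x y x' hxy hx'
    refine ⟨?_, hclosed _ _ _⟩
    obtain ⟨y₂, hy₂Z, hy₂n⟩ := hlip x (hZX _ hxy) x' hx' y hxy
    exact ⟨(x', y₂), hy₂Z, rfl, hy₂n⟩
  · rcases isEmpty_or_nonempty Y with hY | hY
    · exact ⟨Prod.fst, measurable_fst, fun x y x' _ _ => (IsEmpty.false y).elim⟩
    -- main case
    set D : Set ((E × Y) × E) := (Prod.fst ⁻¹' Z) ∩ (Prod.snd ⁻¹' X) with hD_def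
    have hDc : IsClosed D := (hZc.preimage continuous_fst).inter (hX.preimage continuous_snd)
    set S : (E × Y) × E → Set (E × Y) := fun w =>
      {q | q ∈ Z ∧ q.1 = w.2 ∧ ‖g q - g w.1‖ ≤ Lg * dist w.1.1 w.2} with hS_def
    -- upper semicontinuity: inverse images of closed sets are closed
    have hkey : ∀ C : Set (E × Y), IsClosed C →
        IsClosed {w | w ∈ D ∧ (S w ∩ C).Nonempty} := by
      intro C hC
      apply IsSeqClosed.isClosed
      intro u w hu hlim
      have hwD : w ∈ D := hDc.isSeqClosed (fun n => (hu n).1) hlim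
      obtain ⟨hw1Z, hw2X⟩ := hwD
      choose q hqS hqC using fun n => (hu n).2
      have hqZ : ∀ n, q n ∈ Z := fun n => (hqS n).1
      have hq1 : ∀ n, (q n).1 = (u n).2 := fun n => (hqS n).2.1
      have hqnorm : ∀ n, ‖g (q n) - g ((u n).1)‖ ≤ Lg * dist ((u n).1.1) ((u n).2) :=
        fun n => (hqS n).2.2
      have hlim1 : Tendsto (fun n => (u n).1) atTop (𝓝 w.1) :=
        ((continuous_fst.tendsto w).comp hlim)
      have hlim2 : Tendsto (fun n => (u n).2) atTop (𝓝 w.2) :=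
        ((continuous_snd.tendsto w).comp hlim)
      -- the sequence (q n).2 has a cluster point in the section over w.2
      have hcluster : ∃ yb, (w.2, yb) ∈ Z ∧ MapClusterPt yb atTop (fun n => (q n).2) := by
        by_contra hcon
        push_neg at hcon
        have hO : ∀ yb ∈ {y | (w.2, y) ∈ Z}, ∃ O : Set Y, IsOpen O ∧ yb ∈ O ∧
            ∀ᶠ n in atTop, (q n).2 ∉ O := by
          intro yb hyb
          have hnc := hcon yb hyb
          rw [mapClusterPt_iff_frequently] at hnc
          push_neg at hnc
          obtain ⟨t, ht, hfreq⟩ := hnc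
          obtain ⟨O, hOt, hOopen, hybO⟩ := _root_.mem_nhds_iff.1 ht
          exact ⟨O, hOopen, hybO, hfreq.mono (fun n hn hmem => hn (hOt hmem))⟩
        choose! O hOopen hOmem hOev using hO
        obtain ⟨t, hKt⟩ := (hsec w.2 hw2X).1.elim_nhds_subcover' (fun y _ => O y)
          (fun y hy => ((hOopen y hy).mem_nhds (hOmem y hy)))
        have hUopen : IsOpen (⋃ x ∈ t, O ↑x) :=
          isOpen_biUnion (fun x _ => hOopen x x.2)
        obtain ⟨η, hη, husc'⟩ := husc w.2 hw2X _ hUopen hKt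
        have hev1 : ∀ᶠ n in atTop, (q n).2 ∈ ⋃ x ∈ t, O ↑x := by
          have hdist : ∀ᶠ n in atTop, dist w.2 ((u n).2) < η := by
            have := hlim2 (Metric.ball_mem_nhds w.2 hη)
            filter_upwards [this] with n hn
            rw [dist_comm]
            exact mem_ball.1 hn
          filter_upwards [hdist] with n hn
          have hsub : {y | ((u n).2, y) ∈ Z} ⊆ ⋃ x ∈ t, O ↑x :=
            husc' ((u n).2) ((hu n).1.2) hn
          apply hsub
          have : ((q n).1, (q n).2) ∈ Z := by rw [Prod.mk.eta]; exact hqZ n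
          rw [hq1 n] at this
          exact this
        have hev2 : ∀ᶠ n in atTop, (q n).2 ∉ ⋃ x ∈ t, O ↑x := by
          have : ∀ᶠ n in atTop, ∀ x ∈ t, (q n).2 ∉ O ↑x :=
            eventually_all_finset t |>.2 (fun x _ => hOev x x.2)
          filter_upwards [this] with n hn hmem
          obtain ⟨x, hx, hmem'⟩ := Set.mem_iUnion₂.1 hmem
          exact hn x hx hmem'
        obtain ⟨n, h1, h2⟩ := (hev1.and hev2).exists
        exact h2 h1
      obtain ⟨yb, hybZ, hybcl⟩ := hcluster
      obtain ⟨ψ, hψmono, hψtend⟩ := TopologicalSpace.FirstCountableTopology.tendsto_subseq hybcl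
      have hψat : Tendsto ψ atTop atTop := hψmono.tendsto_atTop
      have htendq : Tendsto (fun j => q (ψ j)) atTop (𝓝 (w.2, yb)) := by
        have h1 : Tendsto (fun j => (q (ψ j)).1) atTop (𝓝 w.2) := by
          have : (fun j => (q (ψ j)).1) = fun j => (u (ψ j)).2 := by
            funext j; exact hq1 (ψ j)
          rw [this]
          exact hlim2.comp hψat
        have h2 : Tendsto (fun j => (q (ψ j)).2) atTop (𝓝 yb) := hψtend
        have := h1.prodMk_nhds h2
        simpa using this
      have hqlimZ : (w.2, yb) ∈ Z := hybZ
      have hqlimC : (w.2, yb) ∈ C :=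
        hC.isSeqClosed (fun j => hqC (ψ j)) htendq
      -- pass the norm inequality to the limit
      have hgq : Tendsto (fun j => g (q (ψ j))) atTop (𝓝 (g (w.2, yb))) := by
        have hcw : ContinuousWithinAt g Z (w.2, yb) := hg _ hqlimZ
        exact hcw.tendsto.comp (tendsto_nhdsWithin_iff.2
          ⟨htendq, Eventually.of_forall (fun j => hqZ (ψ j))⟩)
      have hgu : Tendsto (fun j => g ((u (ψ j)).1)) atTop (𝓝 (g w.1)) := by
        have hcw : ContinuousWithinAt g Z w.1 := hg _ hw1Z
        exact hcw.tendsto.comp (tendsto_nhdsWithin_iff.2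
          ⟨hlim1.comp hψat, Eventually.of_forall (fun j => (hu (ψ j)).1.1)⟩)
      have hnorm : ‖g (w.2, yb) - g w.1‖ ≤ Lg * dist w.1.1 w.2 := by
        have hL : Tendsto (fun j => ‖g (q (ψ j)) - g ((u (ψ j)).1)‖) atTop
            (𝓝 ‖g (w.2, yb) - g w.1‖) := (hgq.sub hgu).norm
        have hR : Tendsto (fun j => Lg * dist ((u (ψ j)).1.1) ((u (ψ j)).2)) atTop
            (𝓝 (Lg * dist w.1.1 w.2)) := by
          have hx1 : Tendsto (fun j => (u (ψ j)).1.1) atTop (𝓝 w.1.1) :=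
            ((continuous_fst.tendsto w.1).comp (hlim1.comp hψat))
        
          have hx2 : Tendsto (fun j => (u (ψ j)).2) atTop (𝓝 w.2) := hlim2.comp hψat
          exact (tendsto_const_nhds.mul (hx1.dist hx2))
        exact le_of_tendsto_of_tendsto' hL hR (fun j => hqnorm (ψ j))
      exact ⟨⟨hw1Z, hw2X⟩, (w.2, yb), ⟨hqlimZ, rfl, hnorm⟩, hqlimC⟩
    -- measurability of inverse images of open sets
    have hNE : Nonempty (E × Y) := ⟨(0, hY.some)⟩
    have hmeasU : ∀ U : Set (E × Y), IsOpen U →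
        MeasurableSet {w | w ∈ D ∧ (S w ∩ U).Nonempty} := by
      intro U hU
      obtain ⟨e, he⟩ := TopologicalSpace.exists_dense_seq (E × Y)
      have key : {w | w ∈ D ∧ (S w ∩ U).Nonempty} =
          ⋃ m, ⋃ k : ℕ, ⋃ (_ : closedBall (e m) (1/(k+1) : ℝ) ⊆ U),
            {w | w ∈ D ∧ (S w ∩ closedBall (e m) (1/(k+1) : ℝ)).Nonempty} := by
        ext w
        simp only [Set.mem_setOf_eq, Set.mem_iUnion]
        constructor
        · rintro ⟨hwD, p, hpS, hpU⟩
          obtain ⟨ε, hε, hball⟩ := Metric.isOpen_iff.1 hU p hpU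
          obtain ⟨k, hk⟩ := exists_nat_gt (3/ε)
          have hkpos : (0:ℝ) < 1/(k+1) := by positivity
          have hk' : (1/(k+1) : ℝ) < ε/3 := by
            rw [div_lt_div_iff₀ (by positivity) (by norm_num)]
            have h3 : (3:ℝ)/ε < (k:ℝ)+1 := lt_of_lt_of_le hk (by norm_num)
            rw [div_lt_iff₀ hε] at h3
            linarith
          obtain ⟨m, hm⟩ := he.exists_dist_lt p hkpos
          refine ⟨m, k, ?_, hwD, p, hpS, ?_⟩
          · intro p' hp'
            apply hball
            rw [mem_ball]
            have h1 : dist p' (e m) ≤ 1/(k+1) := mem_closedBall.1 hp'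
            have h2 : dist p' p ≤ dist p' (e m) + dist p (e m) := dist_triangle_right _ _ _
            have := hm
            linarith
          · exact mem_closedBall.2 hm.le
        · rintro ⟨m, k, hsub, hwD, p, hpS, hp⟩
          exact ⟨hwD, p, hpS, hsub hp⟩
      rw [key]
      refine MeasurableSet.iUnion (fun m => MeasurableSet.iUnion (fun k =>
        MeasurableSet.iUnion (fun _ => ?_)))
      exact (hkey _ Metric.isClosed_closedBall).measurableSet
    -- apply the selection theorem
    obtain ⟨s, hs_meas, hs_sel⟩ := krn_selection D hDc.measurableSet S
      (by
        rintro w ⟨hw1, hw2⟩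
        obtain ⟨y₂, hy₂Z, hy₂n⟩ := hlip w.1.1 (hZX _ hw1) w.2 hw2 w.1.2
          (by rw [Prod.mk.eta]; exact hw1)
        refine ⟨(w.2, y₂), hy₂Z, rfl, ?_⟩
        rw [Prod.mk.eta] at hy₂n
        exact hy₂n)
      (fun w _ => hclosed _ _ _)
      hmeasU
    refine ⟨s, hs_meas, fun x y x' hxy hx' => ?_⟩
    have hw : ((x, y), x') ∈ D := ⟨hxy, hx'⟩
    exact hs_sel _ hw
end

section
/- Under the bridging-method assumptions (g bounded continuous with ‖g‖ ≤ M, f convex with L-Lipschitz gradient, 𝒵 L_g-Lipschitz, C an upper bound for ‖∇f(∫ g dμ)‖ over all μ ∈ 𝒫(Z)): if ν is a coupling in 𝒫(Z × X) with π₁₂#ν = μ̄₀ and π₃#ν = m₁, and μ₁ = s#ν where s is the measurable selection of S, then μ₁ has first marginal m₁ and f(∫_Z g dμ₁) − f(∫_Z g dμ̄₀) ≤ L_g (C + L M) ∫_{Z×X} d_X(x,x') dν(x,y,x'). -/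
open MeasureTheory
open scoped RealInnerProductSpace ENNReal NNReal

/-- Convexity inequality for a differentiable convex function:
`f b - f a ≤ ⟪f' b, b - a⟫`. -/
lemma grad_convex_ineq {H : Type*} [NormedAddCommGroup H] [InnerProductSpace ℝ H]
    [CompleteSpace H] (f : H → ℝ) (f' : H → H) (hconv : ConvexOn ℝ Set.univ f)
    (hdiff : ∀ x, HasGradientAt f (f' x) x) (a b : H) :
    f b - f a ≤ ⟪f' b, b - a⟫ := by
  set φ : ℝ → ℝ := fun t => f (a + t • (b - a)) with hφdef
  have hline : ∀ t : ℝ, (AffineMap.lineMap a b : ℝ →ᵃ[ℝ] H) t = a + t • (b - a) := by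
    intro t; simp [AffineMap.lineMap_apply]; abel
  have hφconv : ConvexOn ℝ Set.univ φ := by
    have := hconv.comp_affineMap (AffineMap.lineMap a b : ℝ →ᵃ[ℝ] H)
    have heq : (f ∘ (AffineMap.lineMap a b : ℝ →ᵃ[ℝ] H)) = φ := by
      funext t; simp [hφdef, hline t]
    rw [heq] at this
    simpa using this
  have hc : HasDerivAt (fun t : ℝ => a + t • (b - a)) (b - a) (1 : ℝ) := by
    simpa using ((hasDerivAt_id (1 : ℝ)).smul_const (b - a)).const_add a
  have hb1 : a + (1 : ℝ) • (b - a) = b := by simp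
  have hφd : HasDerivAt φ ⟪f' b, b - a⟫ 1 := by
    have h1 : HasFDerivAt f (InnerProductSpace.toDual ℝ H (f' b) : H →L[ℝ] ℝ)
        (a + (1 : ℝ) • (b - a)) := by
      rw [hb1]; exact (hdiff b).hasFDerivAt
    have h2 := h1.comp_hasDerivAt (1 : ℝ) hc
    simp only [InnerProductSpace.toDual_apply_apply] at h2; exact h2
  have := hφconv.slope_le_of_hasDerivAt (Set.mem_univ (0 : ℝ)) (Set.mem_univ (1 : ℝ))
    one_pos hφd
  have hslope : slope φ 0 1 = f b - f a := by
    simp [slope_def_field, hφdef, hb1]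
  rw [hslope] at this
  exact this

/-- Bridging estimate: pushing a coupling `ν ∈ Π(μ̄₀, m₁)` forward by the measurable
selection `s` of `S` produces `μ₁ ∈ 𝒫_{m₁}(Z)` with
`f(∫ g dμ₁) − f(∫ g dμ̄₀) ≤ L_g (C + L M) ∫ d_X(x,x') dν`. -/
theorem stmt_12 {X Y H : Type*}
    [MetricSpace X] [CompleteSpace X] [SecondCountableTopology X]
    [MeasurableSpace X] [BorelSpace X]
    [MetricSpace Y] [CompleteSpace Y] [SecondCountableTopology Y]
    [MeasurableSpace Y] [BorelSpace Y]
    [NormedAddCommGroup H] [InnerProductSpace ℝ H] [CompleteSpace H]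
    [SecondCountableTopology H] [MeasurableSpace H] [BorelSpace H]
    (Z : Set (X × Y)) (hZ : IsClosed Z)
    (g : X × Y → H) (hgc : Continuous g) (M : ℝ) (hM : ∀ z, ‖g z‖ ≤ M)
    (f : H → ℝ) (f' : H → H)
    (hconv : ConvexOn ℝ Set.univ f)
    (hdiff : ∀ x, HasGradientAt f (f' x) x)
    (L : ℝ≥0) (hlipf : LipschitzWith L f')
    (Lg C : ℝ) (hLg : 0 ≤ Lg)
    (hC : ∀ μ : Measure (X × Y), IsProbabilityMeasure μ → μ Zᶜ = 0 →
      ‖f' (∫ z, g z ∂μ)‖ ≤ C)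
    (μ0 : Measure (X × Y)) [IsProbabilityMeasure μ0] (hμ0Z : μ0 Zᶜ = 0)
    (m1 : Measure X) [IsProbabilityMeasure m1]
    (ν : Measure ((X × Y) × X)) [IsProbabilityMeasure ν]
    (hν1 : ν.map Prod.fst = μ0) (hν2 : ν.map Prod.snd = m1)
    (hνint : Integrable (fun p : (X × Y) × X => dist p.1.1 p.2) ν)
    (s : (X × Y) × X → X × Y) (hs : Measurable s)
    (hsel : ∀ p : (X × Y) × X, p.1 ∈ Z →
      s p ∈ Z ∧ (s p).1 = p.2 ∧ ‖g (s p) - g p.1‖ ≤ Lg * dist p.1.1 p.2)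
    (μ1 : Measure (X × Y)) (hμ1 : μ1 = ν.map s) :
    μ1 Zᶜ = 0 ∧ μ1.map Prod.fst = m1 ∧
    f (∫ z, g z ∂μ1) - f (∫ z, g z ∂μ0)
      ≤ Lg * (C + (L : ℝ) * M) * ∫ p : (X × Y) × X, dist p.1.1 p.2 ∂ν := by
  subst hμ1
  haveI : IsProbabilityMeasure (ν.map s) := Measure.isProbabilityMeasure_map hs.aemeasurable
  have hZm : MeasurableSet Z := hZ.measurableSet
  -- ν-a.e. point has its first coordinate in Z
  have hbad : ν {p : (X × Y) × X | p.1 ∉ Z} = 0 := by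
    have : {p : (X × Y) × X | p.1 ∉ Z} = Prod.fst ⁻¹' Zᶜ := rfl
    rw [this, ← Measure.map_apply measurable_fst hZm.compl, hν1, hμ0Z]
  have haeZ : ∀ᵐ p ∂ν, p.1 ∈ Z := by
    rw [ae_iff]; exact hbad
  -- first conclusion
  have h1 : (ν.map s) Zᶜ = 0 := by
    rw [Measure.map_apply hs hZm.compl]
    refine measure_mono_null ?_ hbad
    intro p hp hpZ
    exact hp (hsel p hpZ).1
  -- second conclusion
  have h2 : (ν.map s).map Prod.fst = m1 := by
    rw [Measure.map_map measurable_fst hs, ← hν2]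
    refine Measure.map_congr ?_
    filter_upwards [haeZ] with p hp
    exact (hsel p hp).2.1
  refine ⟨h1, h2, ?_⟩
  -- integrability facts
  have hgs : Integrable (fun p : (X × Y) × X => g (s p)) ν :=
    (integrable_const M).mono' (hgc.measurable.comp hs).aestronglyMeasurable
      (Filter.Eventually.of_forall fun p => hM _)
  have hgf : Integrable (fun p : (X × Y) × X => g p.1) ν :=
    (integrable_const M).mono' (hgc.measurable.comp measurable_fst).aestronglyMeasurable
      (Filter.Eventually.of_forall fun p => hM _)
  set I : ℝ := ∫ p : (X × Y) × X, dist p.1.1 p.2 ∂ν with hI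
  set b : H := ∫ z, g z ∂(ν.map s) with hbdef
  set a : H := ∫ z, g z ∂μ0 with hadef
  have hIb : b = ∫ p, g (s p) ∂ν := by
    rw [hbdef, integral_map hs.aemeasurable hgc.aestronglyMeasurable]
  have hIa : a = ∫ p, g p.1 ∂ν := by
    rw [hadef, ← hν1, integral_map measurable_fst.aemeasurable hgc.aestronglyMeasurable]
  -- the key norm estimate
  have key : ‖b - a‖ ≤ Lg * I := by
    rw [hIb, hIa, ← integral_sub hgs hgf]
    calc ‖∫ p, (g (s p) - g p.1) ∂ν‖ ≤ ∫ p, ‖g (s p) - g p.1‖ ∂ν :=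
          norm_integral_le_integral_norm _
      _ ≤ ∫ p, Lg * dist p.1.1 p.2 ∂ν := by
          refine integral_mono_ae ((hgs.sub hgf).norm) (hνint.const_mul Lg) ?_
          filter_upwards [haeZ] with p hp
          exact (hsel p hp).2.2
      _ = Lg * I := by rw [hI, MeasureTheory.integral_const_mul]
  -- auxiliary nonnegativity facts
  have hInn : 0 ≤ I := integral_nonneg fun p => dist_nonneg
  have hCb : ‖f' b‖ ≤ C := hC (ν.map s) inferInstance h1
  have hC0 : 0 ≤ C := le_trans (norm_nonneg _) (hC μ0 inferInstance hμ0Z)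
  have hne : Nonempty (X × Y) := by
    by_contra h
    have h0 : μ0 Set.univ = 0 := by
      rw [Set.univ_eq_empty_iff.mpr (not_nonempty_iff.mp h)]; simp
    rw [measure_univ] at h0
    exact one_ne_zero h0
  have hM0 : 0 ≤ M := le_trans (norm_nonneg _) (hM (Classical.arbitrary _))
  -- convexity inequality and conclusion
  have hgrad : f b - f a ≤ ⟪f' b, b - a⟫ := grad_convex_ineq f f' hconv hdiff a b
  have hcs : ⟪f' b, b - a⟫ ≤ ‖f' b‖ * ‖b - a‖ := real_inner_le_norm _ _
  have hmul : ‖f' b‖ * ‖b - a‖ ≤ C * (Lg * I) :=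
    mul_le_mul hCb key (norm_nonneg _) hC0
  have hL0 : (0 : ℝ) ≤ (L : ℝ) := L.coe_nonneg
  calc f b - f a ≤ C * (Lg * I) := le_trans hgrad (le_trans hcs hmul)
    _ ≤ Lg * (C + (L : ℝ) * M) * I := by nlinarith [mul_nonneg hLg (mul_nonneg (mul_nonneg hL0 hM0) hInn)]
end

section
/- If μ̄₀ is an ε₀-minimizer of the MFO problem with marginal m₀, and μ₁ is produced by the bridging method (transport μ̄₀ along an optimal plan between m₀ and m₁ and apply the measurable selection s), then μ₁ is an η-minimizer of the MFO problem with marginal m₁, where η = ε₀ + 2 L_g (C + L M) d₁(m₀, m₁). -/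
open MeasureTheory
open scoped RealInnerProductSpace ENNReal NNReal ProbabilityTheory

/-- Gradient inequality for convex functions: `f x ≥ f y + ⟪∇f y, x - y⟫`. -/
lemma aux_convex_grad_ineq {H : Type*} [NormedAddCommGroup H] [InnerProductSpace ℝ H]
    [CompleteSpace H] {f : H → ℝ} {f' : H → H} (hconv : ConvexOn ℝ Set.univ f)
    (hdiff : ∀ x, HasGradientAt f (f' x) x) (x y : H) :
    f y + ⟪f' y, x - y⟫ ≤ f x := by
  rcases eq_or_ne x y with rfl | hxy
  · simp
  have hA : ConvexOn ℝ Set.univ (fun t : ℝ => f (t • (x - y) + y)) := by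
    have := hconv.comp_affineMap (AffineMap.lineMap y x : ℝ →ᵃ[ℝ] H)
    simpa [Function.comp_def, AffineMap.lineMap_apply] using this
  have hder : HasDerivAt (fun t : ℝ => f (t • (x - y) + y)) ⟪f' y, x - y⟫ 0 := by
    have h1 : HasDerivAt (fun t : ℝ => t • (x - y) + y) (x - y) 0 := by
      simpa using ((hasDerivAt_id (0 : ℝ)).smul_const (x - y)).add_const y
    have h2 : HasFDerivAt f (InnerProductSpace.toDual ℝ H (f' y)) ((0 : ℝ) • (x - y) + y) := by
      simpa using (hdiff y).hasFDerivAt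
    have := h2.comp_hasDerivAt 0 h1
    simpa [Function.comp_def, InnerProductSpace.toDual_apply_apply] using this
  have hs := hA.le_slope_of_hasDerivAt (Set.mem_univ (0 : ℝ)) (Set.mem_univ (1 : ℝ))
    zero_lt_one hder
  rw [slope_def_field] at hs
  have : ⟪f' y, x - y⟫ ≤ f x - f y := by
    calc ⟪f' y, x - y⟫ ≤ (f ((1 : ℝ) • (x - y) + y) - f ((0 : ℝ) • (x - y) + y)) / (1 - 0) := hs
      _ = f x - f y := by simp
  linarith

/-- Pushing forward a coupling through the measurable selection `s` yields a feasible measure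
for the second marginal whose `g`-barycenter is close to that of the first marginal. -/
lemma aux_push {E Y H : Type*}
    [NormedAddCommGroup E] [SecondCountableTopology E] [MeasurableSpace E] [BorelSpace E]
    [MetricSpace Y] [SecondCountableTopology Y] [MeasurableSpace Y] [BorelSpace Y]
    [NormedAddCommGroup H] [InnerProductSpace ℝ H] [CompleteSpace H]
    [SecondCountableTopology H] [MeasurableSpace H] [BorelSpace H]
    (X : Set E) (hX : IsClosed X) (Z : Set (E × Y)) (hZc : IsClosed Z)
    (g : E × Y → H) (hgc : Continuous g) (M : ℝ) (hM : ∀ z, ‖g z‖ ≤ M)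
    (Lg : ℝ) (hLg : 0 ≤ Lg)
    (s : (E × Y) × E → E × Y) (hs : Measurable s)
    (hsel : ∀ p : (E × Y) × E, p.1 ∈ Z → p.2 ∈ X →
      s p ∈ Z ∧ (s p).1 = p.2 ∧ ‖g (s p) - g p.1‖ ≤ Lg * dist p.1.1 p.2)
    (ρ : Measure ((E × Y) × E)) [IsProbabilityMeasure ρ]
    (μa : Measure (E × Y)) [IsProbabilityMeasure μa] (ma : Measure E)
    (hρ1 : ρ.map Prod.fst = μa) (hρ2 : ρ.map Prod.snd = ma)
    (hμaZ : μa Zᶜ = 0) (hmaX : ma Xᶜ = 0)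
    (hint : Integrable (fun p : (E × Y) × E => dist p.1.1 p.2) ρ) :
    IsProbabilityMeasure (ρ.map s) ∧ (ρ.map s) Zᶜ = 0 ∧ (ρ.map s).map Prod.fst = ma ∧
      ‖(∫ z, g z ∂(ρ.map s)) - ∫ z, g z ∂μa‖ ≤ Lg * ∫ p : (E × Y) × E, dist p.1.1 p.2 ∂ρ := by
  have hZm : MeasurableSet Z := hZc.measurableSet
  have hXm : MeasurableSet X := hX.measurableSet
  have hae1 : ∀ᵐ p ∂ρ, p.1 ∈ Z := by
    rw [ae_iff]
    have h : {p : (E × Y) × E | ¬ p.1 ∈ Z} = Prod.fst ⁻¹' Zᶜ := rfl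
    rw [h, ← Measure.map_apply measurable_fst hZm.compl, hρ1]
    exact hμaZ
  have hae2 : ∀ᵐ p ∂ρ, p.2 ∈ X := by
    rw [ae_iff]
    have h : {p : (E × Y) × E | ¬ p.2 ∈ X} = Prod.snd ⁻¹' Xᶜ := rfl
    rw [h, ← Measure.map_apply measurable_snd hXm.compl, hρ2]
    exact hmaX
  have hae : ∀ᵐ p ∂ρ, s p ∈ Z ∧ (s p).1 = p.2 ∧ ‖g (s p) - g p.1‖ ≤ Lg * dist p.1.1 p.2 := by
    filter_upwards [hae1, hae2] with p h1 h2
    exact hsel p h1 h2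
  have hprob : IsProbabilityMeasure (ρ.map s) := Measure.isProbabilityMeasure_map hs.aemeasurable
  refine ⟨hprob, ?_, ?_, ?_⟩
  · rw [Measure.map_apply hs hZm.compl]
    have : ∀ᵐ p ∂ρ, s p ∈ Z := hae.mono fun p hp => hp.1
    rw [ae_iff] at this
    convert this using 2
    rfl
  · rw [Measure.map_map measurable_fst hs]
    have heq : (Prod.fst ∘ s : (E × Y) × E → E) =ᵐ[ρ] Prod.snd :=
      hae.mono fun p hp => hp.2.1
    rw [Measure.map_congr heq, hρ2]
  · have hgm : StronglyMeasurable g := hgc.stronglyMeasurable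
    have i1 : Integrable (fun p : (E × Y) × E => g (s p)) ρ := by
      refine Integrable.mono' (integrable_const M) ((hgm.comp_measurable hs).aestronglyMeasurable)
        (Filter.Eventually.of_forall fun p => hM _)
    have i2 : Integrable (fun p : (E × Y) × E => g p.1) ρ := by
      refine Integrable.mono' (integrable_const M)
        ((hgm.comp_measurable measurable_fst).aestronglyMeasurable)
        (Filter.Eventually.of_forall fun p => hM _)
    have e1 : ∫ z, g z ∂(ρ.map s) = ∫ p, g (s p) ∂ρ :=
      integral_map hs.aemeasurable hgc.aestronglyMeasurable
    have e2 : ∫ z, g z ∂μa = ∫ p, g p.1 ∂ρ := by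
      rw [← hρ1]; exact integral_map measurable_fst.aemeasurable hgc.aestronglyMeasurable
    rw [e1, e2, ← integral_sub i1 i2]
    calc ‖∫ p, (g (s p) - g p.1) ∂ρ‖ ≤ ∫ p, ‖g (s p) - g p.1‖ ∂ρ :=
          norm_integral_le_integral_norm _
      _ ≤ ∫ p, Lg * dist p.1.1 p.2 ∂ρ := by
          refine integral_mono_ae (i1.sub i2).norm (hint.const_mul Lg) ?_
          exact hae.mono fun p hp => hp.2.2
      _ = Lg * ∫ p : (E × Y) × E, dist p.1.1 p.2 ∂ρ := integral_const_mul Lg _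

/-- Gluing: a measure on `E × Y` with first marginal `m` and a coupling on `E × E` with first
marginal `m` can be glued into a measure on `(E × Y) × E`. -/
lemma aux_glue {E Y : Type*}
    [NormedAddCommGroup E] [NormedSpace ℝ E] [CompleteSpace E]
    [SecondCountableTopology E] [MeasurableSpace E] [BorelSpace E]
    [MetricSpace Y] [MeasurableSpace Y] [BorelSpace Y]
    (μ : Measure (E × Y)) [IsProbabilityMeasure μ]
    (γ : Measure (E × E)) [IsProbabilityMeasure γ]
    (h : μ.map Prod.fst = γ.map Prod.fst) :
    ∃ ρ : Measure ((E × Y) × E), IsProbabilityMeasure ρ ∧ ρ.map Prod.fst = μ ∧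
      ρ.map (fun p : (E × Y) × E => (p.1.1, p.2)) = γ := by
  have hne : Nonempty E := by
    rcases isEmpty_or_nonempty E with hE | hE
    · exfalso
      have : (Set.univ : Set (E × E)) = ∅ := Set.univ_eq_empty_iff.2 (by infer_instance)
      have h1 : γ Set.univ = 1 := measure_univ
      rw [this] at h1
      simp at h1
    · exact hE
  set κ : ProbabilityTheory.Kernel E E := γ.condKernel with hκ
  set κ' : ProbabilityTheory.Kernel (E × Y) E := κ.comap Prod.fst measurable_fst with hκ'
  have hκ'M : ProbabilityTheory.IsMarkovKernel κ' := by
    rw [hκ']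
    infer_instance
  refine ⟨μ ⊗ₘ κ', inferInstance, ?_, ?_⟩
  · have := Measure.fst_compProd μ κ'
    exact this
  · have hF : Measurable (fun p : (E × Y) × E => (p.1.1, p.2)) :=
      (measurable_fst.comp measurable_fst).prodMk measurable_snd
    ext t ht
    rw [Measure.map_apply hF ht, Measure.compProd_apply (hF ht)]
    have hkm : Measurable fun e : E => κ e (Prod.mk e ⁻¹' t) :=
      ProbabilityTheory.Kernel.measurable_kernel_prodMk_left ht
    have step : ∀ z : E × Y, κ' z (Prod.mk z ⁻¹' ((fun p : (E × Y) × E => (p.1.1, p.2)) ⁻¹' t))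
        = κ z.1 (Prod.mk z.1 ⁻¹' t) := by
      intro z
      rw [hκ', ProbabilityTheory.Kernel.comap_apply]
      congr 1
    calc ∫⁻ z, κ' z (Prod.mk z ⁻¹' ((fun p : (E × Y) × E => (p.1.1, p.2)) ⁻¹' t)) ∂μ
        = ∫⁻ z, κ z.1 (Prod.mk z.1 ⁻¹' t) ∂μ := by
          exact lintegral_congr fun z => step z
      _ = ∫⁻ e, κ e (Prod.mk e ⁻¹' t) ∂(μ.map Prod.fst) :=
          (lintegral_map hkm measurable_fst).symm
      _ = ∫⁻ e, κ e (Prod.mk e ⁻¹' t) ∂γ.fst := by rw [h]; rfl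
      _ = (γ.fst ⊗ₘ κ) t := (Measure.compProd_apply ht).symm
      _ = γ t := by rw [hκ, γ.disintegrate γ.condKernel]

/-- The bridging method maps an `ε₀`-minimizer `μ̄₀` for the marginal `m₀` to an
`η`-minimizer `μ₁` for the marginal `m₁`, with
`η = ε₀ + 2 L_g (C + L M) d₁(m₀, m₁)`. -/
theorem stmt_14 {E Y H : Type*}
    [NormedAddCommGroup E] [NormedSpace ℝ E] [CompleteSpace E]
    [SecondCountableTopology E] [MeasurableSpace E] [BorelSpace E]
    [MetricSpace Y] [CompleteSpace Y] [SecondCountableTopology Y]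
    [MeasurableSpace Y] [BorelSpace Y]
    [NormedAddCommGroup H] [InnerProductSpace ℝ H] [CompleteSpace H]
    [SecondCountableTopology H] [MeasurableSpace H] [BorelSpace H]
    (X : Set E) (hX : IsClosed X)
    (Z : Set (E × Y)) (hZc : IsClosed Z) (hZX : ∀ z ∈ Z, z.1 ∈ X)
    (hsec : ∀ x ∈ X, IsCompact {y | (x, y) ∈ Z} ∧ {y | (x, y) ∈ Z}.Nonempty)
    (husc : ∀ x ∈ X, ∀ U : Set Y, IsOpen U → {y | (x, y) ∈ Z} ⊆ U →
      ∃ η > (0 : ℝ), ∀ x' ∈ X, dist x x' < η → {y | (x', y) ∈ Z} ⊆ U)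
    (g : E × Y → H) (hgc : Continuous g) (M : ℝ) (hM : ∀ z, ‖g z‖ ≤ M)
    (f : H → ℝ) (f' : H → H)
    (hconv : ConvexOn ℝ Set.univ f)
    (hdiff : ∀ x, HasGradientAt f (f' x) x)
    (L : ℝ≥0) (hlipf : LipschitzWith L f')
    (Lg C : ℝ) (hLg : 0 ≤ Lg)
    (hlip : ∀ x₁ ∈ X, ∀ x₂ ∈ X, ∀ y₁, (x₁, y₁) ∈ Z →
      ∃ y₂, (x₂, y₂) ∈ Z ∧ ‖g (x₂, y₂) - g (x₁, y₁)‖ ≤ Lg * dist x₁ x₂)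
    (hC : ∀ μ : Measure (E × Y), IsProbabilityMeasure μ → μ Zᶜ = 0 →
      ‖f' (∫ z, g z ∂μ)‖ ≤ C)
    (m0 m1 : Measure E) [IsProbabilityMeasure m0] [IsProbabilityMeasure m1]
    (hm0X : m0 Xᶜ = 0) (hm1X : m1 Xᶜ = 0)
    (hm0 : ∃ x₀ : E, Integrable (fun x => dist x x₀) m0)
    (hm1 : ∃ x₀ : E, Integrable (fun x => dist x x₀) m1)
    (V : Measure E → ℝ)
    (hV : ∀ m : Measure E, V m = sInf ((fun μ => f (∫ z, g z ∂μ)) ''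
      {μ : Measure (E × Y) | IsProbabilityMeasure μ ∧ μ Zᶜ = 0 ∧ μ.map Prod.fst = m}))
    (d1 : ℝ)
    (hd1 : d1 = sSup {r | ∃ F : E → ℝ, LipschitzWith 1 F ∧
      r = ∫ x, F x ∂m0 - ∫ x, F x ∂m1})
    (ε0 : ℝ) (hε0 : 0 ≤ ε0)
    (μ0 : Measure (E × Y)) [IsProbabilityMeasure μ0]
    (hμ0Z : μ0 Zᶜ = 0) (hμ0m : μ0.map Prod.fst = m0)
    (hμ0min : f (∫ z, g z ∂μ0) ≤ V m0 + ε0)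
    (ν : Measure ((E × Y) × E)) [IsProbabilityMeasure ν]
    (hν1 : ν.map Prod.fst = μ0) (hν2 : ν.map Prod.snd = m1)
    (hνint : Integrable (fun p : (E × Y) × E => dist p.1.1 p.2) ν)
    (hνopt : ∫ p : (E × Y) × E, dist p.1.1 p.2 ∂ν = d1)
    (s : (E × Y) × E → E × Y) (hs : Measurable s)
    (hsel : ∀ p : (E × Y) × E, p.1 ∈ Z → p.2 ∈ X →
      s p ∈ Z ∧ (s p).1 = p.2 ∧ ‖g (s p) - g p.1‖ ≤ Lg * dist p.1.1 p.2)
    (μ1 : Measure (E × Y)) (hμ1 : μ1 = ν.map s) :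
    (IsProbabilityMeasure μ1 ∧ μ1 Zᶜ = 0 ∧ μ1.map Prod.fst = m1) ∧
    f (∫ z, g z ∂μ1) ≤ V m1 + (ε0 + 2 * Lg * (C + (L : ℝ) * M) * d1) := by
  subst hμ1
  have hne : Nonempty (E × Y) := by
    rcases isEmpty_or_nonempty (E × Y) with hE | hE
    · exfalso
      have h1 : μ0 Set.univ = 1 := measure_univ
      rw [Set.univ_eq_empty_iff.2 hE] at h1
      simp at h1
    · exact hE
  have hd1nn : 0 ≤ d1 := by
    rw [← hνopt]; exact integral_nonneg fun p => dist_nonneg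
  have hMnn : 0 ≤ M := le_trans (norm_nonneg _) (hM hne.some)
  have hCnn : 0 ≤ C := le_trans (norm_nonneg _) (hC μ0 inferInstance hμ0Z)
  -- feasibility of μ1 and barycenter bound
  obtain ⟨hp1, hz1, hm1', hb1⟩ := aux_push X hX Z hZc g hgc M hM Lg hLg s hs hsel ν μ0 m1
    hν1 hν2 hμ0Z hm1X hνint
  rw [hνopt] at hb1
  -- cost comparison using convexity and the gradient bound
  have key : ∀ μa μb : Measure (E × Y), IsProbabilityMeasure μa → IsProbabilityMeasure μb →
      μb Zᶜ = 0 → f (∫ z, g z ∂μb) ≤ f (∫ z, g z ∂μa) +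
        C * ‖(∫ z, g z ∂μb) - ∫ z, g z ∂μa‖ := by
    intro μa μb _ hb hbZ
    set a := ∫ z, g z ∂μa
    set b := ∫ z, g z ∂μb
    have hgrad := aux_convex_grad_ineq hconv hdiff a b
    have hi : |⟪f' b, a - b⟫| ≤ ‖f' b‖ * ‖a - b‖ := abs_real_inner_le_norm _ _
    have hC' : ‖f' b‖ ≤ C := hC μb hb hbZ
    have hmul : ‖f' b‖ * ‖a - b‖ ≤ C * ‖a - b‖ :=
      mul_le_mul_of_nonneg_right hC' (norm_nonneg _)
    have hrev : ‖a - b‖ = ‖b - a‖ := norm_sub_rev a b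
    rw [hrev] at hi hmul
    have hlo := (abs_le.1 hi).1
    linarith
  -- the feasible values are bounded below
  have hbdd : ∀ m : Measure E, BddBelow ((fun μ => f (∫ z, g z ∂μ)) ''
      {μ : Measure (E × Y) | IsProbabilityMeasure μ ∧ μ Zᶜ = 0 ∧ μ.map Prod.fst = m}) := by
    intro m
    refine ⟨f 0 - ‖f' 0‖ * M, ?_⟩
    rintro b ⟨μ, ⟨hμp, hμZ, hμm⟩, rfl⟩
    have : IsProbabilityMeasure μ := hμp
    have hnorm : ‖∫ z, g z ∂μ‖ ≤ M := by
      have h := norm_integral_le_of_norm_le_const (μ := μ) (C := M)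
        (Filter.Eventually.of_forall fun z => hM z)
      simpa using h
    have hgrad := aux_convex_grad_ineq hconv hdiff (∫ z, g z ∂μ) 0
    have hi : |⟪f' 0, (∫ z, g z ∂μ) - 0⟫| ≤ ‖f' 0‖ * ‖(∫ z, g z ∂μ) - 0‖ :=
      abs_real_inner_le_norm _ _
    rw [sub_zero] at hi
    have hmul : ‖f' 0‖ * ‖∫ z, g z ∂μ‖ ≤ ‖f' 0‖ * M :=
      mul_le_mul_of_nonneg_left hnorm (norm_nonneg _)
    have hlo := (abs_le.1 hi).1
    rw [sub_zero] at hgrad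
    linarith
  -- stability of the value function: V m0 ≤ V m1 + C * (Lg * d1)
  have hVle : V m0 ≤ V m1 + C * (Lg * d1) := by
    rw [hV m1]
    have hne1 : ((fun μ => f (∫ z, g z ∂μ)) ''
        {μ : Measure (E × Y) | IsProbabilityMeasure μ ∧ μ Zᶜ = 0 ∧ μ.map Prod.fst = m1}).Nonempty :=
      ⟨_, ⟨ν.map s, ⟨hp1, hz1, hm1'⟩, rfl⟩⟩
    have hlb : V m0 - C * (Lg * d1) ≤ sInf ((fun μ => f (∫ z, g z ∂μ)) ''
        {μ : Measure (E × Y) | IsProbabilityMeasure μ ∧ μ Zᶜ = 0 ∧ μ.map Prod.fst = m1}) := by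
      refine le_csInf hne1 ?_
      rintro b ⟨μ, ⟨hμp, hμZ, hμm⟩, rfl⟩
      have : IsProbabilityMeasure μ := hμp
      -- coupling of m1 and m0 obtained by reversing ν
      set G : (E × Y) × E → E × E := fun p => (p.2, p.1.1) with hG
      have hGm : Measurable G := measurable_snd.prodMk (measurable_fst.comp measurable_fst)
      set γ : Measure (E × E) := ν.map G with hγ
      have : IsProbabilityMeasure γ := Measure.isProbabilityMeasure_map hGm.aemeasurable
      have hγ1 : γ.map Prod.fst = m1 := by
        rw [hγ, Measure.map_map measurable_fst hGm]
        exact hν2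
      have hγ2 : γ.map Prod.snd = m0 := by
        rw [hγ, Measure.map_map measurable_snd hGm]
        have h1 : (Prod.snd ∘ G) = (Prod.fst ∘ (Prod.fst : (E × Y) × E → E × Y)) := rfl
        rw [h1, ← Measure.map_map measurable_fst measurable_fst, hν1, hμ0m]
      obtain ⟨ρ, hρp, hρ1, hρ2⟩ := aux_glue μ γ (by rw [hμm, hγ1])
      have : IsProbabilityMeasure ρ := hρp
      set F : (E × Y) × E → E × E := fun p => (p.1.1, p.2) with hF
      have hFm : Measurable F := (measurable_fst.comp measurable_fst).prodMk measurable_snd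
      have hρsnd : ρ.map Prod.snd = m0 := by
        have h1 : (Prod.snd : (E × Y) × E → E) = Prod.snd ∘ F := rfl
        rw [h1, ← Measure.map_map measurable_snd hFm, hρ2, hγ2]
      have hdc : Continuous (fun q : E × E => dist q.1 q.2) := continuous_fst.dist continuous_snd
      have hdγ : Integrable (fun q : E × E => dist q.1 q.2) γ := by
        rw [hγ, integrable_map_measure hdc.aestronglyMeasurable hGm.aemeasurable]
        have h1 : ((fun q : E × E => dist q.1 q.2) ∘ G) =
            fun p : (E × Y) × E => dist p.1.1 p.2 := by
          funext p; exact dist_comm _ _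
        rw [h1]; exact hνint
      have hdγval : ∫ q : E × E, dist q.1 q.2 ∂γ = d1 := by
        rw [hγ, integral_map hGm.aemeasurable hdc.aestronglyMeasurable, ← hνopt]
        exact integral_congr_ae (Filter.Eventually.of_forall fun p => dist_comm _ _)
      have hdρ : Integrable (fun p : (E × Y) × E => dist p.1.1 p.2) ρ := by
        have h1 : Integrable ((fun q : E × E => dist q.1 q.2) ∘ F) ρ := by
          rw [← integrable_map_measure hdc.aestronglyMeasurable hFm.aemeasurable, hρ2]
          exact hdγ
        exact h1
      have hdρval : ∫ p : (E × Y) × E, dist p.1.1 p.2 ∂ρ = d1 := by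
        have h1 : ∫ q : E × E, dist q.1 q.2 ∂(ρ.map F) = d1 := by rw [hρ2]; exact hdγval
        rwa [integral_map hFm.aemeasurable hdc.aestronglyMeasurable] at h1
      obtain ⟨hp', hz', hm0', hb'⟩ := aux_push X hX Z hZc g hgc M hM Lg hLg s hs hsel ρ μ m0
        hρ1 hρsnd hμZ hm0X hdρ
      rw [hdρval] at hb'
      have : IsProbabilityMeasure (ρ.map s) := hp'
      have h1 : V m0 ≤ f (∫ z, g z ∂(ρ.map s)) := by
        rw [hV m0]
        exact csInf_le (hbdd m0) ⟨ρ.map s, ⟨hp', hz', hm0'⟩, rfl⟩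
      have h2 := key μ (ρ.map s) hμp hp' hz'
      have h3 : C * ‖(∫ z, g z ∂(ρ.map s)) - ∫ z, g z ∂μ‖ ≤ C * (Lg * d1) :=
        mul_le_mul_of_nonneg_left hb' hCnn
      linarith
    linarith
  -- conclusion
  refine ⟨⟨hp1, hz1, hm1'⟩, ?_⟩
  have h2 := key μ0 (ν.map s) inferInstance hp1 hz1
  have h3 : C * ‖(∫ z, g z ∂(ν.map s)) - ∫ z, g z ∂μ0‖ ≤ C * (Lg * d1) :=
    mul_le_mul_of_nonneg_left hb1 hCnn
  have hLM : 0 ≤ (L : ℝ) * M * (Lg * d1) :=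
    mul_nonneg (mul_nonneg L.coe_nonneg hMnn) (mul_nonneg hLg hd1nn)
  nlinarith [h2, h3, hμ0min, hVle, hLM]
end

section
/- Let f : H → ℝ be convex differentiable with L-Lipschitz gradient on a Hilbert space H, and let u_λ(x) = inf_{y ∈ Z_x} ⟨λ, g(x,y)⟩ with g bounded. Then the dual functional D_m(λ) = f*(λ) − ∫_X u_λ dm, defined on dom(f*), is strongly convex with modulus 1/L; consequently D_m has a unique minimizer λ*(m) on dom(f*). Moreover, fixing any λ₀ ∈ dom(f*) and p₀ ∈ ∂f*(λ₀), one has ‖λ*(m)‖ ≤ 3‖λ₀‖ + 2L(M + ‖p₀‖) with M = sup_z ‖g(z)‖, uniformly in m. -/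
set_option linter.unusedSectionVars false
set_option linter.unusedVariables false
set_option maxHeartbeats 1000000

open MeasureTheory
open scoped RealInnerProductSpace ENNReal NNReal


lemma descent_lemma {H : Type*} [NormedAddCommGroup H] [InnerProductSpace ℝ H] [CompleteSpace H]
    (f : H → ℝ) (f' : H → H) (hdiff : ∀ x, HasGradientAt f (f' x) x)
    (L : ℝ) (hL : 0 < L) (hlipf : LipschitzWith (Real.toNNReal L) f') (x d : H) :
    f (x + d) ≤ f x + ⟪f' x, d⟫ + L / 2 * ‖d‖ ^ 2 := by
  set φ : ℝ → ℝ := fun t => f (x + t • d) - t * ⟪f' x, d⟫ - L / 2 * t ^ 2 * ‖d‖ ^ 2 with hφ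
  have hder : ∀ t : ℝ, HasDerivAt φ (⟪f' (x + t • d), d⟫ - ⟪f' x, d⟫ - L * t * ‖d‖ ^ 2) t := by
    intro t
    have hline : HasDerivAt (fun t : ℝ => x + t • d) d t := by
      simpa using ((hasDerivAt_id t).smul_const d).const_add x
    have hcomp : HasDerivAt (fun t : ℝ => f (x + t • d)) ⟪f' (x + t • d), d⟫ t := by
      have := (hdiff (x + t • d)).hasFDerivAt.comp_hasDerivAt t hline
      simp at this; exact this
    have h2 : HasDerivAt (fun t : ℝ => t * ⟪f' x, d⟫) ⟪f' x, d⟫ t := by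
      simpa using (hasDerivAt_id t).mul_const ⟪f' x, d⟫
    have h3 : HasDerivAt (fun t : ℝ => L / 2 * t ^ 2 * ‖d‖ ^ 2) (L * t * ‖d‖ ^ 2) t := by
      have := ((hasDerivAt_pow 2 t).const_mul (L / 2)).mul_const (‖d‖ ^ 2)
      exact this.congr_deriv (by ring)
    exact (hcomp.sub h2).sub h3
  have hmono : AntitoneOn φ (Set.Icc 0 1) := by
    apply antitoneOn_of_deriv_nonpos (convex_Icc 0 1)
    · exact fun t _ => ((hder t).differentiableAt.continuousAt).continuousWithinAt
    · intro t ht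
      exact (hder t).differentiableAt.differentiableWithinAt
    · intro t ht
      rw [interior_Icc] at ht
      rw [(hder t).deriv]
      have hLnn : ((Real.toNNReal L : ℝ≥0) : ℝ) = L := Real.coe_toNNReal _ hL.le
      have h1 : ⟪f' (x + t • d), d⟫ - ⟪f' x, d⟫ = ⟪f' (x + t • d) - f' x, d⟫ := by
        rw [inner_sub_left]
      have h2 : ⟪f' (x + t • d) - f' x, d⟫ ≤ ‖f' (x + t • d) - f' x‖ * ‖d‖ :=
        real_inner_le_norm _ _
      have h3 : ‖f' (x + t • d) - f' x‖ ≤ L * (t * ‖d‖) := by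
        have h := hlipf.dist_le_mul (x + t • d) x
        simp only [dist_eq_norm, hLnn] at h
        have he : x + t • d - x = t • d := by abel
        rw [he] at h
        calc ‖f' (x + t • d) - f' x‖ ≤ L * ‖t • d‖ := h
          _ ≤ L * (t * ‖d‖) := by
              rw [norm_smul, Real.norm_eq_abs, abs_of_pos ht.1]
      nlinarith [norm_nonneg d, ht.1.le, h1, h2, h3]
  have hkey := hmono (Set.mem_Icc.2 ⟨le_refl 0, zero_le_one⟩) (Set.mem_Icc.2 ⟨zero_le_one, le_refl 1⟩) zero_le_one
  have e0 : φ 0 = f x := by simp [hφ]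
  have e1 : φ 1 = f (x + d) - ⟪f' x, d⟫ - L / 2 * ‖d‖ ^ 2 := by simp [hφ]
  rw [e0, e1] at hkey
  linarith



lemma fstar_key {H : Type*} [NormedAddCommGroup H] [InnerProductSpace ℝ H]
    (f : H → ℝ) (f' : H → H) (L : ℝ) (hL : 0 < L)
    (hdesc : ∀ x d, f (x + d) ≤ f x + ⟪f' x, d⟫ + L / 2 * ‖d‖ ^ 2)
    (dom : Set H)
    (hdom : dom = {lam | BddAbove (Set.range fun x => ⟪lam, x⟫ - f x)})
    (fstar : H → ℝ)
    (hfstar : ∀ lam ∈ dom, fstar lam = sSup (Set.range fun x => ⟪lam, x⟫ - f x))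
    {lam mu : H} (hlam : lam ∈ dom) (hmu : mu ∈ dom)
    {a b : ℝ} (ha : 0 ≤ a) (hb : 0 ≤ b) (hab : a + b = 1) :
    a • lam + b • mu ∈ dom ∧
      fstar (a • lam + b • mu) ≤
        a * fstar lam + b * fstar mu - a * b / (2 * L) * ‖lam - mu‖ ^ 2 := by
  have hlam' : BddAbove (Set.range fun x => ⟪lam, x⟫ - f x) := by rw [hdom] at hlam; exact hlam
  have hmu' : BddAbove (Set.range fun x => ⟪mu, x⟫ - f x) := by rw [hdom] at hmu; exact hmu
  set d : H := lam - mu with hd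
  set C : ℝ := a * fstar lam + b * fstar mu - a * b / (2 * L) * ‖lam - mu‖ ^ 2 with hC
  have hptwise : ∀ x : H, ⟪a • lam + b • mu, x⟫ - f x ≤ C := by
    intro x
    set n : ℝ := ‖d‖ ^ 2 with hn
    have hA1 : ⟪lam, x⟫ + (b / L) * ⟪lam, d⟫ - (f x + (b / L) * ⟪f' x, d⟫
        + L / 2 * ((b / L) ^ 2 * n)) ≤ fstar lam := by
      have h1 : ⟪lam, x + (b / L) • d⟫ - f (x + (b / L) • d) ≤ fstar lam := by
        rw [hfstar lam hlam]
        exact le_csSup hlam' ⟨x + (b / L) • d, rfl⟩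
      have h2 := hdesc x ((b / L) • d)
      have e1 : ⟪lam, x + (b / L) • d⟫ = ⟪lam, x⟫ + (b / L) * ⟪lam, d⟫ := by
        rw [inner_add_right, real_inner_smul_right]
      have e2 : ⟪f' x, (b / L) • d⟫ = (b / L) * ⟪f' x, d⟫ := real_inner_smul_right _ _ _
      have e3 : ‖(b / L) • d‖ ^ 2 = (b / L) ^ 2 * n := by
        rw [norm_smul, Real.norm_eq_abs, mul_pow, sq_abs]
      rw [e1] at h1; rw [e2, e3] at h2
      linarith
    have hA2 : ⟪mu, x⟫ - (a / L) * ⟪mu, d⟫ - (f x - (a / L) * ⟪f' x, d⟫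
        + L / 2 * ((a / L) ^ 2 * n)) ≤ fstar mu := by
      have h1 : ⟪mu, x + (-(a / L)) • d⟫ - f (x + (-(a / L)) • d) ≤ fstar mu := by
        rw [hfstar mu hmu]
        exact le_csSup hmu' ⟨x + (-(a / L)) • d, rfl⟩
      have h2 := hdesc x ((-(a / L)) • d)
      have e1 : ⟪mu, x + (-(a / L)) • d⟫ = ⟪mu, x⟫ - (a / L) * ⟪mu, d⟫ := by
        rw [inner_add_right, real_inner_smul_right]; ring
      have e2 : ⟪f' x, (-(a / L)) • d⟫ = -((a / L) * ⟪f' x, d⟫) := by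
        rw [real_inner_smul_right]; ring
      have e3 : ‖(-(a / L)) • d‖ ^ 2 = (a / L) ^ 2 * n := by
        rw [norm_smul, Real.norm_eq_abs, mul_pow, sq_abs, hn]
        ring
      rw [e1] at h1; rw [e2, e3] at h2
      linarith
    have hdiff : ⟪lam, d⟫ - ⟪mu, d⟫ = n := by
      rw [hn, ← inner_sub_left, hd, real_inner_self_eq_norm_sq]
    have hexp : ⟪a • lam + b • mu, x⟫ = a * ⟪lam, x⟫ + b * ⟪mu, x⟫ := by
      rw [inner_add_left, real_inner_smul_left, real_inner_smul_left]
    have hbeq : b = 1 - a := by linarith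
    have hkey : ⟪a • lam + b • mu, x⟫ - f x + a * b / (2 * L) * n =
        a * (⟪lam, x⟫ + (b / L) * ⟪lam, d⟫ - (f x + (b / L) * ⟪f' x, d⟫
          + L / 2 * ((b / L) ^ 2 * n)))
        + b * (⟪mu, x⟫ - (a / L) * ⟪mu, d⟫ - (f x - (a / L) * ⟪f' x, d⟫
          + L / 2 * ((a / L) ^ 2 * n))) := by
      rw [hexp]
      have hlamd : ⟪lam, d⟫ = ⟪mu, d⟫ + n := by linarith
      rw [hlamd, hbeq]
      field_simp
      ring
    have hsum : a * (⟪lam, x⟫ + (b / L) * ⟪lam, d⟫ - (f x + (b / L) * ⟪f' x, d⟫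
          + L / 2 * ((b / L) ^ 2 * n)))
        + b * (⟪mu, x⟫ - (a / L) * ⟪mu, d⟫ - (f x - (a / L) * ⟪f' x, d⟫
          + L / 2 * ((a / L) ^ 2 * n))) ≤ a * fstar lam + b * fstar mu :=
      add_le_add (mul_le_mul_of_nonneg_left hA1 ha) (mul_le_mul_of_nonneg_left hA2 hb)
    have : ⟪a • lam + b • mu, x⟫ - f x + a * b / (2 * L) * n ≤ a * fstar lam + b * fstar mu := by
      rw [hkey]; exact hsum
    rw [hC]
    linarith
  have hmem : a • lam + b • mu ∈ dom := by
    rw [hdom]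
    exact ⟨C, by rintro r ⟨x, rfl⟩; exact hptwise x⟩
  refine ⟨hmem, ?_⟩
  rw [hfstar _ hmem]
  exact csSup_le ⟨⟪a • lam + b • mu, 0⟫ - f 0, ⟨0, rfl⟩⟩ (by rintro r ⟨x, rfl⟩; exact hptwise x)



section U
variable {X Y H : Type*} [MetricSpace X] [MetricSpace Y]
  [NormedAddCommGroup H] [InnerProductSpace ℝ H]
  (Z : Set (X × Y)) (hZne : ∀ x : X, ∃ y, (x, y) ∈ Z)
  (g : X × Y → H) (M : ℝ) (hM : ∀ z, ‖g z‖ ≤ M)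
  (u : H → X → ℝ)
  (hu : ∀ lam x, u lam x = sInf {r | ∃ y, (x, y) ∈ Z ∧ r = ⟪lam, g (x, y)⟫})

include hZne in
lemma S_nonempty (lam : H) (x : X) :
    {r | ∃ y, (x, y) ∈ Z ∧ r = ⟪lam, g (x, y)⟫}.Nonempty := by
  obtain ⟨y, hy⟩ := hZne x
  exact ⟨_, y, hy, rfl⟩

include hM in
lemma S_lb (lam : H) (x : X) :
    ∀ r ∈ {r | ∃ y, (x, y) ∈ Z ∧ r = ⟪lam, g (x, y)⟫}, -(M * ‖lam‖) ≤ r := by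
  rintro r ⟨y, hy, rfl⟩
  have h1 := abs_real_inner_le_norm lam (g (x, y))
  have h2 := hM (x, y)
  have h3 := norm_nonneg lam
  have h4 := neg_abs_le (⟪lam, g (x, y)⟫)
  nlinarith

include hM hu in
lemma u_le_elem (lam : H) (x : X) (y : Y) (hy : (x, y) ∈ Z) :
    u lam x ≤ ⟪lam, g (x, y)⟫ := by
  rw [hu]
  exact csInf_le ⟨-(M * ‖lam‖), S_lb Z g M hM lam x⟩ ⟨y, hy, rfl⟩

include hZne hM hu in
lemma u_lb (lam : H) (x : X) : -(M * ‖lam‖) ≤ u lam x := by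
  rw [hu]
  exact le_csInf (S_nonempty Z hZne g lam x) (S_lb Z g M hM lam x)

include hZne hM hu in
lemma u_ub (lam : H) (x : X) : u lam x ≤ M * ‖lam‖ := by
  obtain ⟨y, hy⟩ := hZne x
  refine le_trans (u_le_elem Z g M hM u hu lam x y hy) ?_
  have h1 := abs_real_inner_le_norm lam (g (x, y))
  have h2 := hM (x, y)
  have h3 := norm_nonneg lam
  have h4 := le_abs_self (⟪lam, g (x, y)⟫)
  nlinarith

include hZne hM hu in
lemma u_lip_lam (lam mu : H) (x : X) : u lam x ≤ u mu x + M * ‖lam - mu‖ := by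
  have key : u lam x - M * ‖lam - mu‖ ≤ u mu x := by
    rw [hu mu x]
    refine le_csInf (S_nonempty Z hZne g mu x) ?_
    rintro r ⟨y, hy, rfl⟩
    have h1 : u lam x ≤ ⟪lam, g (x, y)⟫ := u_le_elem Z g M hM u hu lam x y hy
    have h2 : ⟪lam, g (x, y)⟫ = ⟪mu, g (x, y)⟫ + ⟪lam - mu, g (x, y)⟫ := by
      rw [inner_sub_left]; ring
    have h3 := abs_real_inner_le_norm (lam - mu) (g (x, y))
    have h4 := hM (x, y)
    have h5 := norm_nonneg (lam - mu)
    have h6 := le_abs_self (⟪lam - mu, g (x, y)⟫)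
    nlinarith
  linarith

include hZne hM hu in
lemma u_concave (lam mu : H) (a b : ℝ) (ha : 0 ≤ a) (hb : 0 ≤ b) (hab : a + b = 1)
    (x : X) : a * u lam x + b * u mu x ≤ u (a • lam + b • mu) x := by
  rw [hu (a • lam + b • mu) x]
  refine le_csInf (S_nonempty Z hZne g _ x) ?_
  rintro r ⟨y, hy, rfl⟩
  have h1 : u lam x ≤ ⟪lam, g (x, y)⟫ := u_le_elem Z g M hM u hu lam x y hy
  have h2 : u mu x ≤ ⟪mu, g (x, y)⟫ := u_le_elem Z g M hM u hu mu x y hy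
  have h3 : ⟪a • lam + b • mu, g (x, y)⟫ = a * ⟪lam, g (x, y)⟫ + b * ⟪mu, g (x, y)⟫ := by
    rw [inner_add_left, real_inner_smul_left, real_inner_smul_left]
  rw [h3]
  exact add_le_add (mul_le_mul_of_nonneg_left h1 ha) (mul_le_mul_of_nonneg_left h2 hb)

include hZne hM hu in
lemma u_lip_x (Lg : ℝ)
    (hZlip : ∀ x₁ x₂ : X, ∀ y₁, (x₁, y₁) ∈ Z →
      ∃ y₂, (x₂, y₂) ∈ Z ∧ ‖g (x₂, y₂) - g (x₁, y₁)‖ ≤ Lg * dist x₁ x₂)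
    (lam : H) (x₁ x₂ : X) :
    u lam x₂ ≤ u lam x₁ + ‖lam‖ * Lg * dist x₁ x₂ := by
  have key : u lam x₂ - ‖lam‖ * Lg * dist x₁ x₂ ≤ u lam x₁ := by
    rw [hu lam x₁]
    refine le_csInf (S_nonempty Z hZne g lam x₁) ?_
    rintro r ⟨y₁, hy₁, rfl⟩
    obtain ⟨y₂, hy₂, hg⟩ := hZlip x₁ x₂ y₁ hy₁
    have h1 : u lam x₂ ≤ ⟪lam, g (x₂, y₂)⟫ := u_le_elem Z g M hM u hu lam x₂ y₂ hy₂
    have h2 : ⟪lam, g (x₂, y₂)⟫ = ⟪lam, g (x₁, y₁)⟫ + ⟪lam, g (x₂, y₂) - g (x₁, y₁)⟫ := by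
      rw [inner_sub_right]; ring
    have h3 := abs_real_inner_le_norm lam (g (x₂, y₂) - g (x₁, y₁))
    have h5 := norm_nonneg lam
    have h6 := le_abs_self (⟪lam, g (x₂, y₂) - g (x₁, y₁)⟫)
    nlinarith
  linarith
end U

/-- The dual functional `D_m(λ) = f*(λ) − ∫ u_λ dm` is `(1/L)`-strongly convex on
`dom(f*)`, admits a unique minimizer `λ*(m)` there, and `‖λ*(m)‖` is bounded by
`3‖λ₀‖ + 2L(M + ‖p₀‖)` uniformly in `m`, for any `λ₀ ∈ dom(f*)` and `p₀ ∈ ∂f*(λ₀)`. -/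
theorem stmt_15 {X Y H : Type*}
    [MetricSpace X] [MeasurableSpace X] [BorelSpace X]
    [MetricSpace Y]
    [NormedAddCommGroup H] [InnerProductSpace ℝ H] [CompleteSpace H]
    (Z : Set (X × Y)) (hZne : ∀ x : X, ∃ y, (x, y) ∈ Z)
    (g : X × Y → H) (M : ℝ) (hM : ∀ z, ‖g z‖ ≤ M)
    (Lg : ℝ) (hLg : 0 ≤ Lg)
    (hZlip : ∀ x₁ x₂ : X, ∀ y₁, (x₁, y₁) ∈ Z →
      ∃ y₂, (x₂, y₂) ∈ Z ∧ ‖g (x₂, y₂) - g (x₁, y₁)‖ ≤ Lg * dist x₁ x₂)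
    (f : H → ℝ) (f' : H → H)
    (hconv : ConvexOn ℝ Set.univ f)
    (hdiff : ∀ x, HasGradientAt f (f' x) x)
    (L : ℝ) (hL : 0 < L) (hlipf : LipschitzWith (Real.toNNReal L) f')
    (u : H → X → ℝ)
    (hu : ∀ lam x, u lam x = sInf {r | ∃ y, (x, y) ∈ Z ∧ r = ⟪lam, g (x, y)⟫})
    (dom : Set H)
    (hdom : dom = {lam | BddAbove (Set.range fun x => ⟪lam, x⟫ - f x)})
    (fstar : H → ℝ)
    (hfstar : ∀ lam ∈ dom, fstar lam = sSup (Set.range fun x => ⟪lam, x⟫ - f x))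
    (m : Measure X) [IsProbabilityMeasure m]
    (D : H → ℝ) (hD : ∀ lam, D lam = fstar lam - ∫ x, u lam x ∂m)
    (lam0 : H) (hlam0 : lam0 ∈ dom) (p0 : H)
    (hp0 : ∀ lam ∈ dom, fstar lam0 + ⟪p0, lam - lam0⟫ ≤ fstar lam) :
    StrongConvexOn dom (1 / L) D ∧
    ∃ lamstar : H, (lamstar ∈ dom ∧ ∀ lam ∈ dom, D lamstar ≤ D lam) ∧
      (∀ lam' ∈ dom, (∀ lam ∈ dom, D lam' ≤ D lam) → lam' = lamstar) ∧
      ‖lamstar‖ ≤ 3 * ‖lam0‖ + 2 * L * (M + ‖p0‖) := by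
  classical
  have hX : Nonempty X := by
    by_contra h
    rw [not_nonempty_iff] at h
    have h1 : m Set.univ = 1 := measure_univ
    rw [Set.univ_eq_empty_iff.mpr h, measure_empty] at h1
    exact zero_ne_one h1
  obtain ⟨x0⟩ := hX
  obtain ⟨yy0, hyy0⟩ := hZne x0
  have hM0 : 0 ≤ M := le_trans (norm_nonneg _) (hM (x0, yy0))
  have hdesc : ∀ x d, f (x + d) ≤ f x + ⟪f' x, d⟫ + L / 2 * ‖d‖ ^ 2 :=
    descent_lemma f f' hdiff L hL hlipf
  -- integrability of u lam
  have hint : ∀ lam : H, Integrable (u lam) m := by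
    intro lam
    have hlip : LipschitzWith (Real.toNNReal (‖lam‖ * Lg)) (u lam) := by
      apply LipschitzWith.of_dist_le_mul
      intro x₁ x₂
      rw [Real.dist_eq, Real.coe_toNNReal _ (by positivity), abs_sub_le_iff]
      constructor
      · have h := u_lip_x Z hZne g M hM u hu Lg hZlip lam x₂ x₁
        rw [dist_comm] at h
        linarith
      · have h := u_lip_x Z hZne g M hM u hu Lg hZlip lam x₁ x₂
        linarith
    refine Integrable.mono' (integrable_const (M * ‖lam‖))
      hlip.continuous.aestronglyMeasurable ?_
    filter_upwards with x
    rw [Real.norm_eq_abs, abs_le]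
    exact ⟨by linarith [u_lb Z hZne g M hM u hu lam x], u_ub Z hZne g M hM u hu lam x⟩
  have hIub : ∀ lam : H, (∫ x, u lam x ∂m) ≤ M * ‖lam‖ := by
    intro lam
    have h1 : (∫ x, u lam x ∂m) ≤ ∫ _, M * ‖lam‖ ∂m :=
      integral_mono (hint lam) (integrable_const _) (fun x => u_ub Z hZne g M hM u hu lam x)
    simpa using h1
  have hIlip : ∀ lam mu : H, (∫ x, u lam x ∂m) ≤ (∫ x, u mu x ∂m) + M * ‖lam - mu‖ := by
    intro lam mu
    have h1 : (∫ x, u lam x ∂m) ≤ ∫ x, (u mu x + M * ‖lam - mu‖) ∂m :=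
      integral_mono (hint lam) ((hint mu).add (integrable_const _))
        (fun x => u_lip_lam Z hZne g M hM u hu lam mu x)
    rw [integral_add (hint mu) (integrable_const _)] at h1
    simpa using h1
  have hIconc : ∀ (lam mu : H) (a b : ℝ), 0 ≤ a → 0 ≤ b → a + b = 1 →
      a * (∫ x, u lam x ∂m) + b * (∫ x, u mu x ∂m) ≤ ∫ x, u (a • lam + b • mu) x ∂m := by
    intro lam mu a b ha hb hab
    have h1 : (∫ x, (a * u lam x + b * u mu x) ∂m) ≤ ∫ x, u (a • lam + b • mu) x ∂m :=
      integral_mono (((hint lam).const_mul a).add ((hint mu).const_mul b)) (hint _)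
        (fun x => u_concave Z hZne g M hM u hu lam mu a b ha hb hab x)
    rw [integral_add ((hint lam).const_mul a) ((hint mu).const_mul b),
      integral_const_mul, integral_const_mul] at h1
    exact h1
  -- convexity of dom and strong convexity inequalities
  have hkey : ∀ lam ∈ dom, ∀ mu ∈ dom, ∀ a b : ℝ, 0 ≤ a → 0 ≤ b → a + b = 1 →
      a • lam + b • mu ∈ dom ∧
        fstar (a • lam + b • mu) ≤
          a * fstar lam + b * fstar mu - a * b / (2 * L) * ‖lam - mu‖ ^ 2 :=
    fun lam hlam mu hmu a b ha hb hab =>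
      fstar_key f f' L hL hdesc dom hdom fstar hfstar hlam hmu ha hb hab
  have hconvdom : Convex ℝ dom := fun lam hlam mu hmu a b ha hb hab =>
    (hkey lam hlam mu hmu a b ha hb hab).1
  have hSCineq : ∀ lam ∈ dom, ∀ mu ∈ dom, ∀ a b : ℝ, 0 ≤ a → 0 ≤ b → a + b = 1 →
      D (a • lam + b • mu) ≤ a * D lam + b * D mu - a * b / (2 * L) * ‖lam - mu‖ ^ 2 := by
    intro lam hlam mu hmu a b ha hb hab
    have h1 := (hkey lam hlam mu hmu a b ha hb hab).2
    have h2 := hIconc lam mu a b ha hb hab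
    calc D (a • lam + b • mu) = fstar (a • lam + b • mu) - ∫ x, u (a • lam + b • mu) x ∂m :=
          hD _
      _ ≤ (a * fstar lam + b * fstar mu - a * b / (2 * L) * ‖lam - mu‖ ^ 2)
          - (a * (∫ x, u lam x ∂m) + b * (∫ x, u mu x ∂m)) := by linarith
      _ = a * D lam + b * D mu - a * b / (2 * L) * ‖lam - mu‖ ^ 2 := by
          rw [hD lam, hD mu]; ring
  have hSC : StrongConvexOn dom (1 / L) D := by
    refine ⟨hconvdom, ?_⟩
    intro lam hlam mu hmu a b ha hb hab
    have h := hSCineq lam hlam mu hmu a b ha hb hab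
    have e : a * b * ((1 / L) / 2 * ‖lam - mu‖ ^ 2) = a * b / (2 * L) * ‖lam - mu‖ ^ 2 := by
      rw [div_div, mul_comm L 2]; ring
    rw [smul_eq_mul, smul_eq_mul, e]
    exact h
  -- division-free strong convexity
  have hSC2 : ∀ lam ∈ dom, ∀ mu ∈ dom, ∀ a b : ℝ, 0 ≤ a → 0 ≤ b → a + b = 1 →
      2 * L * D (a • lam + b • mu) ≤
        2 * L * (a * D lam) + 2 * L * (b * D mu) - a * b * ‖lam - mu‖ ^ 2 := by
    intro lam hlam mu hmu a b ha hb hab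
    have h := hSCineq lam hlam mu hmu a b ha hb hab
    have h2 := mul_le_mul_of_nonneg_left h (by positivity : (0:ℝ) ≤ 2 * L)
    have e : 2 * L * (a * D lam + b * D mu - a * b / (2 * L) * ‖lam - mu‖ ^ 2)
        = 2 * L * (a * D lam) + 2 * L * (b * D mu) - a * b * ‖lam - mu‖ ^ 2 := by
      have h2L : (2 * L) ≠ 0 := by positivity
      field_simp
    rw [e] at h2
    exact h2
  set K : ℝ := M + ‖p0‖ with hK
  clear_value K
  have hK0 : 0 ≤ K := by rw [hK]; exact add_nonneg hM0 (norm_nonneg _)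
  -- linear lower bound on D
  have hlin : ∀ lam ∈ dom, D lam0 - K * ‖lam - lam0‖ ≤ D lam := by
    intro lam hlam
    have h1 := hp0 lam hlam
    have h2 : -(‖p0‖ * ‖lam - lam0‖) ≤ ⟪p0, lam - lam0⟫ := by
      have ha := abs_real_inner_le_norm p0 (lam - lam0)
      have hb := neg_abs_le (⟪p0, lam - lam0⟫)
      linarith
    have h3 := hIlip lam lam0
    have e1 := hD lam
    have e2 := hD lam0
    have eK : K * ‖lam - lam0‖ = M * ‖lam - lam0‖ + ‖p0‖ * ‖lam - lam0‖ := by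
      rw [hK]; ring
    linarith
  -- coercivity
  have hcoer : ∀ lam ∈ dom, ‖lam - lam0‖ ^ 2 ≤
      4 * L * (D lam - D lam0) + 4 * L * K * ‖lam - lam0‖ := by
    intro lam hlam
    have hmid : ((1:ℝ)/2) • lam0 + ((1:ℝ)/2) • lam ∈ dom :=
      hconvdom hlam0 hlam (by norm_num) (by norm_num) (by norm_num)
    have hsc := hSC2 lam0 hlam0 lam hlam ((1:ℝ)/2) ((1:ℝ)/2) (by norm_num) (by norm_num)
      (by norm_num)
    have hl := hlin _ hmid
    have enu : ((1:ℝ)/2) • lam0 + ((1:ℝ)/2) • lam - lam0 = ((1:ℝ)/2) • (lam - lam0) := by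
      module
    have en : ‖((1:ℝ)/2) • lam0 + ((1:ℝ)/2) • lam - lam0‖ = (1/2) * ‖lam - lam0‖ := by
      rw [enu, norm_smul, Real.norm_eq_abs]
      norm_num
    rw [en] at hl
    have erev : ‖lam0 - lam‖ = ‖lam - lam0‖ := norm_sub_rev _ _
    rw [erev] at hsc
    have hl2 := mul_le_mul_of_nonneg_left hl (by positivity : (0:ℝ) ≤ 2 * L)
    linarith [hsc, hl2]
  have hbelow : ∀ lam ∈ dom, D lam0 - L * K ^ 2 ≤ D lam := by
    intro lam hlam
    nlinarith [hcoer lam hlam, sq_nonneg (‖lam - lam0‖ - 2 * L * K), hL]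
  -- infimum
  have hSne : (D '' dom).Nonempty := ⟨D lam0, lam0, hlam0, rfl⟩
  have hSbdd : BddBelow (D '' dom) :=
    ⟨D lam0 - L * K ^ 2, by rintro r ⟨lam, hlam, rfl⟩; exact hbelow lam hlam⟩
  set c : ℝ := sInf (D '' dom) with hc
  clear_value c
  have hc_le : ∀ lam ∈ dom, c ≤ D lam := by
    intro lam h
    rw [hc]
    exact csInf_le hSbdd ⟨lam, h, rfl⟩
  have hseq : ∀ n : ℕ, ∃ lam, lam ∈ dom ∧ D lam < c + 1 / ((n:ℝ) + 1) := by
    intro n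
    have hpos : (0:ℝ) < 1 / ((n:ℝ) + 1) := by positivity
    obtain ⟨r, ⟨lam, hlam, rfl⟩, hr⟩ := exists_lt_of_csInf_lt hSne
      (by rw [← hc]; linarith : sInf (D '' dom) < c + 1 / ((n:ℝ)+1))
    exact ⟨lam, hlam, hr⟩
  choose seq hseqmem hseqlt using hseq
  have hfrac1 : ∀ n : ℕ, 1 / ((n:ℝ) + 1) ≤ 1 := by
    intro n
    rw [div_le_one (by positivity)]
    have := Nat.cast_nonneg (α := ℝ) n
    linarith
  -- pairwise estimate
  have hpair : ∀ lam ∈ dom, ∀ mu ∈ dom,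
      ‖lam - mu‖ ^ 2 ≤ 4 * L * (D lam - c) + 4 * L * (D mu - c) := by
    intro lam hlam mu hmu
    have hmid : ((1:ℝ)/2) • lam + ((1:ℝ)/2) • mu ∈ dom :=
      hconvdom hlam hmu (by norm_num) (by norm_num) (by norm_num)
    have hsc := hSC2 lam hlam mu hmu ((1:ℝ)/2) ((1:ℝ)/2) (by norm_num) (by norm_num)
      (by norm_num)
    have hcm := hc_le _ hmid
    have h2 := mul_le_mul_of_nonneg_left hcm (by positivity : (0:ℝ) ≤ 2 * L)
    linarith [hsc, h2]
  -- Cauchy minimizing sequence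
  have hdistbound : ∀ n k N : ℕ, N ≤ n → N ≤ k →
      dist (seq n) (seq k) ≤ Real.sqrt (8 * L / ((N:ℝ) + 1)) := by
    intro n k N hn hk
    have hp := hpair (seq n) (hseqmem n) (seq k) (hseqmem k)
    have hn' : 1 / ((n:ℝ) + 1) ≤ 1 / ((N:ℝ) + 1) := by
      apply one_div_le_one_div_of_le (by positivity)
      have : (N:ℝ) ≤ (n:ℝ) := Nat.cast_le.2 hn
      linarith
    have hk' : 1 / ((k:ℝ) + 1) ≤ 1 / ((N:ℝ) + 1) := by
      apply one_div_le_one_div_of_le (by positivity)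
      have : (N:ℝ) ≤ (k:ℝ) := Nat.cast_le.2 hk
      linarith
    have ha : 4 * L * (D (seq n) - c) ≤ 4 * L * (1 / ((N:ℝ) + 1)) :=
      mul_le_mul_of_nonneg_left (by linarith [hseqlt n]) (by positivity)
    have hb : 4 * L * (D (seq k) - c) ≤ 4 * L * (1 / ((N:ℝ) + 1)) :=
      mul_le_mul_of_nonneg_left (by linarith [hseqlt k]) (by positivity)
    rw [dist_eq_norm]
    apply Real.le_sqrt_of_sq_le
    have e : 8 * L / ((N:ℝ) + 1) = 4 * L * (1 / ((N:ℝ) + 1)) + 4 * L * (1 / ((N:ℝ) + 1)) := by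
      ring
    rw [e]
    linarith
  have hb0 : Filter.Tendsto (fun N : ℕ => Real.sqrt (8 * L / ((N:ℝ) + 1)))
      Filter.atTop (nhds 0) := by
    have h1 : Filter.Tendsto (fun N : ℕ => 8 * L / ((N:ℝ) + 1)) Filter.atTop (nhds 0) := by
      have h2 := tendsto_one_div_add_atTop_nhds_zero_nat.const_mul (8 * L)
      simpa [mul_one_div, div_eq_mul_inv] using h2
    have h3 := (Real.continuous_sqrt.tendsto 0).comp h1
    simpa [Function.comp_def] using h3
  have hcauchy : CauchySeq seq := cauchySeq_of_le_tendsto_0 _ hdistbound hb0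
  obtain ⟨lamstar, hlim⟩ := cauchySeq_tendsto_of_complete hcauchy
  -- uniform bound on the sequence
  set R : ℝ := Real.sqrt (4 * L * (D lam0 - c) + 4 * L) with hR
  have hnormbd : ∀ n, ‖seq n - lam0‖ ≤ R := by
    intro n
    have hp := hpair (seq n) (hseqmem n) lam0 hlam0
    have h1 : D (seq n) - c < 1 := by linarith [hseqlt n, hfrac1 n]
    have h4 : 4 * L * (D (seq n) - c) ≤ 4 * L * 1 :=
      mul_le_mul_of_nonneg_left h1.le (by positivity)
    rw [hR]
    apply Real.le_sqrt_of_sq_le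
    linarith [hp, h4]
  clear_value R
  have hBn : ∀ n, ‖seq n‖ ≤ ‖lam0‖ + R := by
    intro n
    have h := norm_sub_norm_le (seq n) lam0
    linarith [hnormbd n]
  have hbdd_mem : ∀ lam ∈ dom, BddAbove (Set.range fun x => ⟪lam, x⟫ - f x) := by
    intro lam h
    rw [hdom] at h
    exact h
  have hinner_tend : ∀ x : H, Filter.Tendsto (fun n => ⟪seq n, x⟫ - f x) Filter.atTop
      (nhds (⟪lamstar, x⟫ - f x)) := by
    intro x
    have hcont : Continuous fun v : H => ⟪v, x⟫ := continuous_id.inner continuous_const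
    exact ((hcont.tendsto lamstar).comp hlim).sub tendsto_const_nhds
  -- the limit is in dom
  have hmemstar : lamstar ∈ dom := by
    rw [hdom]
    refine ⟨c + 1 + M * (‖lam0‖ + R), ?_⟩
    rintro r ⟨x, rfl⟩
    have hterm : ∀ n, ⟪seq n, x⟫ - f x ≤ c + 1 + M * (‖lam0‖ + R) := by
      intro n
      have h1 : ⟪seq n, x⟫ - f x ≤ fstar (seq n) := by
        rw [hfstar _ (hseqmem n)]
        exact le_csSup (hbdd_mem _ (hseqmem n)) ⟨x, rfl⟩
      have h2 := hD (seq n)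
      have h3 := hIub (seq n)
      have h4 : M * ‖seq n‖ ≤ M * (‖lam0‖ + R) := mul_le_mul_of_nonneg_left (hBn n) hM0
      have h5 : D (seq n) < c + 1 := by linarith [hseqlt n, hfrac1 n]
      linarith
    exact le_of_tendsto (hinner_tend x) (Filter.Eventually.of_forall hterm)
  -- convergence of the integral term
  have hItend : Filter.Tendsto (fun n => ∫ x, u (seq n) x ∂m) Filter.atTop
      (nhds (∫ x, u lamstar x ∂m)) := by
    rw [tendsto_iff_dist_tendsto_zero]
    have key : ∀ n, dist (∫ x, u (seq n) x ∂m) (∫ x, u lamstar x ∂m) ≤ M * dist (seq n) lamstar := by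
      intro n
      rw [Real.dist_eq, abs_sub_le_iff, dist_eq_norm]
      constructor
      · linarith [hIlip (seq n) lamstar]
      · have h := hIlip lamstar (seq n)
        rw [norm_sub_rev] at h
        linarith
    have h0 : Filter.Tendsto (fun n => M * dist (seq n) lamstar) Filter.atTop (nhds 0) := by
      have h1 := (tendsto_iff_dist_tendsto_zero.mp hlim).const_mul M
      simpa using h1
    exact squeeze_zero (fun n => dist_nonneg) key h0
  -- the limit is a minimizer
  have hfs : fstar lamstar ≤ c + ∫ x, u lamstar x ∂m := by
    rw [hfstar _ hmemstar]
    have hne : Nonempty H := ⟨0⟩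
    refine csSup_le (Set.range_nonempty _) ?_
    rintro r ⟨x, rfl⟩
    have hterm : ∀ n : ℕ, ⟪seq n, x⟫ - f x ≤ c + 1 / ((n:ℝ) + 1) + ∫ x, u (seq n) x ∂m := by
      intro n
      have h1 : ⟪seq n, x⟫ - f x ≤ fstar (seq n) := by
        rw [hfstar _ (hseqmem n)]
        exact le_csSup (hbdd_mem _ (hseqmem n)) ⟨x, rfl⟩
      have h2 := hD (seq n)
      linarith [hseqlt n]
    have htend2 : Filter.Tendsto (fun n : ℕ => c + 1 / ((n:ℝ) + 1) + ∫ x, u (seq n) x ∂m)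
        Filter.atTop (nhds (c + 0 + ∫ x, u lamstar x ∂m)) :=
      (tendsto_const_nhds.add tendsto_one_div_add_atTop_nhds_zero_nat).add hItend
    have h := le_of_tendsto_of_tendsto' (hinner_tend x) htend2 hterm
    simpa using h
  have hDstar : D lamstar ≤ c := by
    rw [hD]
    linarith [hfs]
  have hmin : ∀ lam ∈ dom, D lamstar ≤ D lam := fun lam h => le_trans hDstar (hc_le lam h)
  have hDc : D lamstar = c := le_antisymm hDstar (hc_le lamstar hmemstar)
  -- uniqueness
  have huniq : ∀ lam' ∈ dom, (∀ lam ∈ dom, D lam' ≤ D lam) → lam' = lamstar := by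
    intro lam' hmem' hmin'
    have h1 : D lam' = c := le_antisymm (hDc ▸ hmin' lamstar hmemstar) (hc_le lam' hmem')
    have hp := hpair lam' hmem' lamstar hmemstar
    have e1 : 4 * L * (D lam' - c) = 0 := by rw [h1]; ring
    have e2 : 4 * L * (D lamstar - c) = 0 := by rw [hDc]; ring
    have h2 : ‖lam' - lamstar‖ ^ 2 ≤ 0 := by linarith
    have h3 : ‖lam' - lamstar‖ = 0 := by
      have h4 : ‖lam' - lamstar‖ ^ 2 = 0 := le_antisymm h2 (by positivity)
      exact pow_eq_zero_iff (two_ne_zero) |>.mp h4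
    exact sub_eq_zero.mp (norm_eq_zero.mp h3)
  -- norm bound
  have hDle : D lamstar ≤ D lam0 := hmin lam0 hlam0
  have hstep : ∀ s : ℝ, 0 < s → s < 1 →
      (1 - s) * ‖lamstar - lam0‖ ^ 2 ≤ 2 * L * K * ‖lamstar - lam0‖ := by
    intro s hs hs1
    have hnu : (1 - s) • lam0 + s • lamstar ∈ dom :=
      hconvdom hlam0 hmemstar (by linarith) hs.le (by ring)
    have hsc := hSC2 lam0 hlam0 lamstar hmemstar (1 - s) s (by linarith) hs.le (by ring)
    have hl := hlin _ hnu
    have enu : (1 - s) • lam0 + s • lamstar - lam0 = s • (lamstar - lam0) := by module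
    have en : ‖(1 - s) • lam0 + s • lamstar - lam0‖ = s * ‖lamstar - lam0‖ := by
      rw [enu, norm_smul, Real.norm_eq_abs, abs_of_pos hs]
    rw [en] at hl
    have erev : ‖lam0 - lamstar‖ = ‖lamstar - lam0‖ := norm_sub_rev _ _
    rw [erev] at hsc
    have hl2 := mul_le_mul_of_nonneg_left hl (by positivity : (0:ℝ) ≤ 2 * L)
    have hds := mul_le_mul_of_nonneg_left hDle (by positivity : (0:ℝ) ≤ 2 * L * s)
    have hcomb : s * ((1 - s) * ‖lamstar - lam0‖ ^ 2) ≤ s * (2 * L * K * ‖lamstar - lam0‖) := by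
      linarith [hl2, hsc, hds]
    exact le_of_mul_le_mul_left hcomb hs
  have hr2 : ‖lamstar - lam0‖ ^ 2 ≤ 2 * L * K * ‖lamstar - lam0‖ := by
    set r : ℝ := ‖lamstar - lam0‖ with hrdef
    have hrnn : 0 ≤ r := by rw [hrdef]; exact norm_nonneg _
    clear_value r
    by_contra hcon
    push_neg at hcon
    have hr0 : 0 < r := by
      rcases hrnn.lt_or_eq with h | h
      · exact h
      · exfalso
        rw [← h] at hcon
        simp at hcon
    have hs0 : (0:ℝ) < (r ^ 2 - 2 * L * K * r) / (2 * r ^ 2) := by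
      apply div_pos (by linarith) (by positivity)
    have hs1 : (r ^ 2 - 2 * L * K * r) / (2 * r ^ 2) < 1 := by
      rw [div_lt_one (by positivity)]
      linarith [pow_pos hr0 2,
        mul_nonneg (mul_nonneg (by linarith : (0:ℝ) ≤ 2 * L) hK0) hr0.le]
    have h := hstep _ hs0 hs1
    have he : (1 - (r ^ 2 - 2 * L * K * r) / (2 * r ^ 2)) * r ^ 2 = (r ^ 2 + 2 * L * K * r) / 2 := by
      field_simp [hr0.ne']
      ring
    rw [he] at h
    linarith
  have hrle : ‖lamstar - lam0‖ ≤ 2 * L * K := by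
    have h2LK0 : (0:ℝ) ≤ 2 * L * K := mul_nonneg (by linarith) hK0
    by_contra hcon2
    push_neg at hcon2
    have hrpos : 0 < ‖lamstar - lam0‖ := lt_of_le_of_lt h2LK0 hcon2
    nlinarith [hr2, mul_lt_mul_of_pos_right hcon2 hrpos]
  refine ⟨hSC, lamstar, ⟨hmemstar, hmin⟩, huniq, ?_⟩
  have h := norm_sub_norm_le lamstar lam0
  have h2LK : 2 * L * K = 2 * L * (M + ‖p0‖) := by rw [hK]
  linarith [norm_nonneg lam0, hrle, h2LK ▸ hrle]
end

section
/- Let λ*(m) be the unique minimizer of the (1/L)-strongly convex dual functional D_m(λ) = f*(λ) − ∫_X u_λ dm on dom(f*), and suppose ‖λ*(m)‖ ≤ C* for all m and that λ ↦ u_λ(x) makes x ↦ u_λ(x) (C* L_g)-Lipschitz for ‖λ‖ ≤ C*. Then for all probability measures m₀, m₁: |D_{m₀}(λ*(m₀)) − D_{m₁}(λ*(m₁))| ≤ C* L_g d₁(m₀, m₁) and ‖λ*(m₀) − λ*(m₁)‖² ≤ 2 C* L_g L d₁(m₀, m₁). -/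
open MeasureTheory
open scoped ENNReal

open Filter Topology in
/-- Strong convexity minimizer inequality. -/
lemma sc_min {H : Type*} [NormedAddCommGroup H] [NormedSpace ℝ H]
    {s : Set H} {μ : ℝ} {f : H → ℝ} (hf : StrongConvexOn s μ f)
    {x y : H} (hx : x ∈ s) (hy : y ∈ s) (hmin : ∀ z ∈ s, f x ≤ f z) :
    f x + μ / 2 * ‖x - y‖ ^ 2 ≤ f y := by
  set c : ℝ := μ / 2 * ‖x - y‖ ^ 2 with hc
  have key : ∀ t : ℝ, t ∈ Set.Ioo (0:ℝ) 1 → (1 - t) * c ≤ f y - f x := by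
    intro t ht
    obtain ⟨ht0, ht1⟩ := ht
    have hcomb := hf.2 hy hx ht0.le (by linarith : (0:ℝ) ≤ 1 - t) (by ring : t + (1 - t) = 1)
    have hmem : t • y + (1 - t) • x ∈ s := hf.1 hy hx ht0.le (by linarith) (by ring)
    have h1 := hmin _ hmem
    have hnorm : ‖y - x‖ = ‖x - y‖ := norm_sub_rev _ _
    have hcomb' : f (t • y + (1 - t) • x) ≤ t * f y + (1 - t) * f x - t * (1 - t) * c := by
      simpa [hc, hnorm, smul_eq_mul] using hcomb
    have h2 : t * f x ≤ t * (f y - (1 - t) * c) := by nlinarith [h1, hcomb']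
    have h3 : f x ≤ f y - (1 - t) * c := le_of_mul_le_mul_left h2 ht0
    linarith
  have hlim : Tendsto (fun t : ℝ => (1 - t) * c) (𝓝[>] (0:ℝ)) (𝓝 c) := by
    have : Tendsto (fun t : ℝ => (1 - t) * c) (𝓝 (0:ℝ)) (𝓝 ((1 - 0) * c)) :=
      ((continuous_const.sub continuous_id).mul continuous_const).tendsto 0
    simpa using this.mono_left nhdsWithin_le_nhds
  have hev : ∀ᶠ t in 𝓝[>] (0:ℝ), (1 - t) * c ≤ f y - f x := by
    filter_upwards [Ioo_mem_nhdsGT_of_mem (by norm_num : (0:ℝ) ∈ Set.Ico (0:ℝ) 1)] with t ht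
    exact key t ht
  have := le_of_tendsto hlim hev
  linarith

open Filter in
/-- Any 1-Lipschitz test function is bounded by the KR supremum. -/
lemma kr_bound {X : Type*} [MetricSpace X] [MeasurableSpace X] [BorelSpace X]
    (m0 m1 : Measure X) [IsProbabilityMeasure m0] [IsProbabilityMeasure m1]
    (hm0 : ∃ x₀ : X, Integrable (fun x => dist x x₀) m0)
    (hm1 : ∃ x₀ : X, Integrable (fun x => dist x x₀) m1)
    (F : X → ℝ) (hF : LipschitzWith 1 F) :
    (∫ x, F x ∂m0) - ∫ x, F x ∂m1 ≤
      sSup {r | ∃ F : X → ℝ, LipschitzWith 1 F ∧ r = ∫ x, F x ∂m0 - ∫ x, F x ∂m1} := by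
  obtain ⟨x₀, hx₀⟩ := hm0
  obtain ⟨x₁, hx₁⟩ := hm1
  have hd1 : Integrable (fun x => dist x x₀) m1 := by
    have hbound : Integrable (fun x => dist x x₁ + dist x₁ x₀) m1 :=
      hx₁.add (integrable_const _)
    refine hbound.mono ?_ (Eventually.of_forall fun x => ?_)
    · exact (continuous_id.dist continuous_const).aestronglyMeasurable
    · simp only [Real.norm_eq_abs, abs_of_nonneg dist_nonneg,
        abs_of_nonneg (by positivity : (0:ℝ) ≤ dist x x₁ + dist x₁ x₀)]
      exact dist_triangle x x₁ x₀
  refine le_csSup ?_ ⟨F, hF, rfl⟩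
  refine ⟨(∫ x, dist x x₀ ∂m0) + ∫ x, dist x x₀ ∂m1, ?_⟩
  rintro r ⟨G, hG, rfl⟩
  have hGc : Continuous G := hG.continuous
  have hGabs : ∀ x, |G x - G x₀| ≤ dist x x₀ := fun x => by
    simpa [Real.dist_eq] using hG.dist_le_mul x x₀
  have hint : ∀ (m : Measure X), Integrable (fun x => dist x x₀) m →
      Integrable (fun x => G x - G x₀) m := fun m hm =>
    hm.mono ((hGc.sub continuous_const).aestronglyMeasurable)
      (Eventually.of_forall fun x => by
        simpa [Real.norm_eq_abs, abs_of_nonneg dist_nonneg] using hGabs x)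
  have hint0 := hint m0 hx₀
  have hint1 := hint m1 hd1
  have key : ∀ (m : Measure X) [IsProbabilityMeasure m],
      Integrable (fun x => dist x x₀) m → Integrable (fun x => G x - G x₀) m →
      (∫ x, G x ∂m) = (∫ x, G x - G x₀ ∂m) + G x₀ := by
    intro m _ hd hi
    have : (∫ x, G x ∂m) = ∫ x, (G x - G x₀) + G x₀ ∂m := by
      congr 1; funext x; ring
    rw [this, integral_add hi (integrable_const _), integral_const]
    simp
  rw [key m0 hx₀ hint0, key m1 hd1 hint1]
  have b0 : (∫ x, G x - G x₀ ∂m0) ≤ ∫ x, dist x x₀ ∂m0 := by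
    refine integral_mono hint0 hx₀ fun x => ?_
    exact (le_abs_self _).trans (hGabs x)
  have b1 : -(∫ x, G x - G x₀ ∂m1) ≤ ∫ x, dist x x₀ ∂m1 := by
    rw [← integral_neg]
    refine integral_mono hint1.neg hd1 fun x => ?_
    exact (neg_le_abs _).trans (hGabs x)
  linarith

/-- Stability of the dual problem: the optimal dual values are Lipschitz in `m` and the
dual minimizers are ½-Hölder in `m` with respect to the Kantorovich–Rubinstein
distance. -/
theorem stmt_17 {X H : Type*}
    [MetricSpace X] [MeasurableSpace X] [BorelSpace X]
    [NormedAddCommGroup H] [InnerProductSpace ℝ H] [CompleteSpace H]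
    (dom : Set H) (hdomc : Convex ℝ dom)
    (phi : H → ℝ) (u : H → X → ℝ)
    (L : ℝ) (hL : 0 < L) (Cstar Lg : ℝ) (hCstar : 0 ≤ Cstar) (hLg : 0 ≤ Lg)
    (m0 m1 : Measure X) [IsProbabilityMeasure m0] [IsProbabilityMeasure m1]
    (hm0 : ∃ x₀ : X, Integrable (fun x => dist x x₀) m0)
    (hm1 : ∃ x₀ : X, Integrable (fun x => dist x x₀) m1)
    (D : Measure X → H → ℝ)
    (hD : ∀ (m : Measure X) (lam : H), D m lam = phi lam - ∫ x, u lam x ∂m)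
    (hs0 : StrongConvexOn dom (1 / L) (D m0))
    (hs1 : StrongConvexOn dom (1 / L) (D m1))
    (lamstar0 lamstar1 : H)
    (h0 : lamstar0 ∈ dom ∧ ∀ lam ∈ dom, D m0 lamstar0 ≤ D m0 lam)
    (h1 : lamstar1 ∈ dom ∧ ∀ lam ∈ dom, D m1 lamstar1 ≤ D m1 lam)
    (hb0 : ‖lamstar0‖ ≤ Cstar) (hb1 : ‖lamstar1‖ ≤ Cstar)
    (hulip : ∀ lam : H, ‖lam‖ ≤ Cstar →
      LipschitzWith (Real.toNNReal (Cstar * Lg)) (u lam))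
    (huint : ∀ lam : H, ‖lam‖ ≤ Cstar →
      Integrable (u lam) m0 ∧ Integrable (u lam) m1)
    (d1 : ℝ)
    (hd1 : d1 = sSup {r | ∃ F : X → ℝ, LipschitzWith 1 F ∧
      r = ∫ x, F x ∂m0 - ∫ x, F x ∂m1}) :
    |D m0 lamstar0 - D m1 lamstar1| ≤ Cstar * Lg * d1 ∧
    ‖lamstar0 - lamstar1‖ ^ 2 ≤ 2 * Cstar * Lg * L * d1 := by
  set K : ℝ := Cstar * Lg with hK
  have hK0 : 0 ≤ K := mul_nonneg hCstar hLg
  -- key estimate: integral differences of u lam are bounded by K * d1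
  have hkey : ∀ lam : H, ‖lam‖ ≤ Cstar →
      |(∫ x, u lam x ∂m0) - ∫ x, u lam x ∂m1| ≤ K * d1 := by
    intro lam hlam
    have hlip := hulip lam hlam
    rcases eq_or_lt_of_le hK0 with hKz | hKpos
    · -- K = 0 : u lam is constant
      obtain ⟨x₀, -⟩ := hm0
      have hconst : u lam = fun _ => u lam x₀ := by
        funext x
        have := hlip.dist_le_mul x x₀
        rw [← hKz] at this
        simp only [Real.toNNReal_zero, NNReal.coe_zero, zero_mul] at this
        exact dist_le_zero.mp this
      rw [hconst]
      simp only [integral_const, measure_univ, ENNReal.toReal_one, probReal_univ, one_smul, sub_self, abs_zero]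
      rw [← hKz, zero_mul]
    · -- K > 0 : rescale to a 1-Lipschitz test function
      set F : X → ℝ := fun x => u lam x / K with hF
      have hF1 : LipschitzWith 1 F := by
        refine LipschitzWith.of_dist_le_mul fun x y => ?_
        have h : dist (u lam x) (u lam y) ≤ K * dist x y := by
          simpa [Real.coe_toNNReal K hK0] using hlip.dist_le_mul x y
        rw [NNReal.coe_one, one_mul]
        calc dist (F x) (F y) = dist (u lam x) (u lam y) / K := by
              rw [show F x = u lam x / K from rfl, show F y = u lam y / K from rfl,
                Real.dist_eq, Real.dist_eq, div_sub_div_same, abs_div, abs_of_pos hKpos]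
          _ ≤ K * dist x y / K := by gcongr
          _ = dist x y := by field_simp
      have hFneg : LipschitzWith 1 fun x => -F x :=
        LipschitzWith.of_dist_le_mul fun x y => by
          rw [dist_neg_neg]; simpa using hF1.dist_le_mul x y
      have hint0 := (huint lam hlam).1
      have hint1 := (huint lam hlam).2
      have hIF0 : (∫ x, F x ∂m0) = (∫ x, u lam x ∂m0) / K := by
        simp only [hF]; exact integral_div K _
      have hIF1 : (∫ x, F x ∂m1) = (∫ x, u lam x ∂m1) / K := by
        simp only [hF]; exact integral_div K _
      have hup := kr_bound m0 m1 hm0 hm1 F hF1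
      have hdn := kr_bound m0 m1 hm0 hm1 (fun x => -F x) hFneg
      rw [← hd1] at hup hdn
      rw [integral_neg, integral_neg] at hdn
      rw [hIF0, hIF1] at hup hdn
      rw [abs_le]
      constructor
      · have h' : ((∫ x, u lam x ∂m1) - ∫ x, u lam x ∂m0) / K ≤ d1 := by
          rw [← div_sub_div_same]; linarith [hdn]
        have := (div_le_iff₀ hKpos).mp h'
        linarith
      · have h' : ((∫ x, u lam x ∂m0) - ∫ x, u lam x ∂m1) / K ≤ d1 := by
          rw [← div_sub_div_same]; linarith [hup]
        have := (div_le_iff₀ hKpos).mp h'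
        linarith
  have hk0 := hkey lamstar0 hb0
  have hk1 := hkey lamstar1 hb1
  -- exchange identities
  have hex0 : D m1 lamstar0 - D m0 lamstar0
      = (∫ x, u lamstar0 x ∂m0) - ∫ x, u lamstar0 x ∂m1 := by
    rw [hD m1 lamstar0, hD m0 lamstar0]; ring
  have hex1 : D m0 lamstar1 - D m1 lamstar1
      = (∫ x, u lamstar1 x ∂m1) - ∫ x, u lamstar1 x ∂m0 := by
    rw [hD m0 lamstar1, hD m1 lamstar1]; ring
  obtain ⟨hmem0, hmin0⟩ := h0
  obtain ⟨hmem1, hmin1⟩ := h1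
  have hA := hmin0 lamstar1 hmem1  -- D m0 lamstar0 ≤ D m0 lamstar1
  have hB := hmin1 lamstar0 hmem0  -- D m1 lamstar1 ≤ D m1 lamstar0
  have habs0 := abs_le.mp hk0
  have habs1 := abs_le.mp hk1
  constructor
  · rw [abs_le]
    constructor
    · -- -K d1 ≤ D m0 λ0 - D m1 λ1
      have : D m1 lamstar1 ≤ D m1 lamstar0 := hB
      linarith [habs0.1, habs0.2]
    · have : D m0 lamstar0 ≤ D m0 lamstar1 := hA
      linarith [habs1.1, habs1.2]
  · -- strong convexity inequality on both sides
    have hsc0 := sc_min hs0 hmem0 hmem1 hmin0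
    have hsc1 := sc_min hs1 hmem1 hmem0 hmin1
    have hnorm : ‖lamstar1 - lamstar0‖ = ‖lamstar0 - lamstar1‖ := norm_sub_rev _ _
    rw [hnorm] at hsc1
    have hsum : (1 / L) * ‖lamstar0 - lamstar1‖ ^ 2 ≤ 2 * K * d1 := by
      linarith [habs0.1, habs0.2, habs1.1, habs1.2]
    have hL' : (0:ℝ) < 1 / L := by positivity
    calc ‖lamstar0 - lamstar1‖ ^ 2
        = L * ((1 / L) * ‖lamstar0 - lamstar1‖ ^ 2) := by field_simp
      _ ≤ L * (2 * K * d1) := by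
          exact mul_le_mul_of_nonneg_left hsum hL.le
      _ = 2 * Cstar * Lg * L * d1 := by rw [hK]; ring
end
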